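/- arXiv:math/9812161 — 6 statements merged into one kernel-verified Lean document; each statement's English description precedes it below -/
import Mathlib

section
/- Let τ ∈ ℂ with Im τ > 0, let ℓ be a positive integer, let η ∈ ℂ satisfy θ1(2mη) ≠ 0 for all integers m with 1 ≤ m ≤ ℓ, and let E ∈ ℂ. If Ψ : ℂ → ℂ is an entire function satisfying θ1(2x−2ℓη)·Ψ(x+η) + θ1(2x+2ℓη)·Ψ(x−η) = E·θ1(2x)·Ψ(x) for all x ∈ ℂ, then Ψ(jη) = Ψ(−jη) for every integer j with 1 ≤ j ≤ ℓ. -/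
open Complex Finset

/-- Jacobi theta function θ₁(x|τ). -/
noncomputable def theta1 (τ x : ℂ) : ℂ :=
  ∑' k : ℤ, Complex.exp ((Real.pi : ℂ) * Complex.I * τ * ((k : ℂ) + 1/2)^2 +
    2 * (Real.pi : ℂ) * Complex.I * (x + 1/2) * ((k : ℂ) + 1/2))

/-- Elliptic number [n] = θ₁(2nη). -/
noncomputable def en (τ η : ℂ) (n : ℤ) : ℂ := theta1 τ (2 * (n : ℂ) * η)

/-- Elliptic factorial [n]! = ∏_{j=1}^n [j]. -/
noncomputable def efact (τ η : ℂ) (n : ℕ) : ℂ := ∏ j ∈ Finset.range n, en τ η ((j : ℤ) + 1)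

/-- Elliptic binomial coefficient [n over m]. -/
noncomputable def ebinom (τ η : ℂ) (n m : ℕ) : ℂ :=
  efact τ η n / (efact τ η m * efact τ η (n - m))

/-- Φ(x,ζ) = θ₁(ζ+x)/(θ₁(x)θ₁(ζ)). -/
noncomputable def Phi (τ x ζ : ℂ) : ℂ := theta1 τ (ζ + x) / (theta1 τ x * theta1 τ ζ)

/-- The polynomials A_{(ℓ−s)η}(E), indexed by s = 0, 1, …, ℓ;
`Apoly τ η ℓ E s = A_{(ℓ−s)η}(E)`. -/
noncomputable def Apoly (τ η : ℂ) (ℓ : ℕ) (E : ℂ) : ℕ → ℂ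
  | 0 => 1
  | 1 => en τ η (ℓ : ℤ) / en τ η (2 * (ℓ : ℤ)) * E
  | (s + 2) =>
      en τ η ((ℓ : ℤ) - (s + 1)) / en τ η (2 * (ℓ : ℤ) - (s + 1)) * E *
        Apoly τ η ℓ E (s + 1)
      + en τ η ((s : ℤ) + 1) / en τ η (2 * (ℓ : ℤ) - (s + 1)) * Apoly τ η ℓ E s

/-- The coefficient A_k(x,λ) of the commuting difference operator A_λ. -/
noncomputable def Acoef (τ η : ℂ) (ℓ : ℕ) (k : ℕ) (x lam : ℂ) : ℂ :=
  (-1 : ℂ)^k * (efact τ η ℓ / efact τ η (2*ℓ)) * ebinom τ η ℓ k *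
  (∏ j ∈ Finset.range (ℓ - k),
     theta1 τ (2*x + 2*((ℓ : ℂ) - (j : ℂ))*η) * theta1 τ (2*lam + 2*((ℓ : ℂ) - (j : ℂ))*η) /
       theta1 τ (2*x + 2*lam + 2*((k : ℂ) - (j : ℂ))*η)) *
  (∏ j ∈ Finset.range k,
     theta1 τ (2*x - 2*((ℓ : ℂ) - (j : ℂ))*η) * theta1 τ (2*lam - 2*((ℓ : ℂ) - (j : ℂ))*η) /
       theta1 τ (2*x + 2*lam + 2*((k : ℂ) + (j : ℂ) - (ℓ : ℂ))*η))

/-- The difference operator A_λ acting on functions: (A_λ f)(x) = Σ_k A_k(x,λ) f(x+(2k−ℓ)η+λ). -/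
noncomputable def Aop (τ η : ℂ) (ℓ : ℕ) (lam : ℂ) (f : ℂ → ℂ) (x : ℂ) : ℂ :=
  ∑ k ∈ Finset.range (ℓ + 1), Acoef τ η ℓ k x lam * f (x + (2*(k : ℂ) - (ℓ : ℂ))*η + lam)

/-- All theta-denominators occurring in the coefficients A_k(x,λ) are nonzero. -/
def domAcoef (τ η : ℂ) (ℓ : ℕ) (x lam : ℂ) : Prop :=
  ∀ k ∈ Finset.range (ℓ + 1),
    (∀ j ∈ Finset.range (ℓ - k), theta1 τ (2*x + 2*lam + 2*((k : ℂ) - (j : ℂ))*η) ≠ 0) ∧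
    (∀ j ∈ Finset.range k, theta1 τ (2*x + 2*lam + 2*((k : ℂ) + (j : ℂ) - (ℓ : ℂ))*η) ≠ 0)

/-- The space Θ⁺_{4ℓ} of even theta functions of order 4ℓ. -/
def ThetaPlus (τ : ℂ) (ℓ : ℕ) (F : ℂ → ℂ) : Prop :=
  Differentiable ℂ F ∧
  (∀ x, F (x + 1) = F x) ∧
  (∀ x, F (x + τ) = Complex.exp (-4*(Real.pi : ℂ)*Complex.I*(ℓ : ℂ)*τ
      - 8*(Real.pi : ℂ)*Complex.I*(ℓ : ℂ)*x) * F x) ∧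
  (∀ x, F (-x) = F x)

/-- θ₁ is odd. -/
lemma theta1_neg (τ x : ℂ) : theta1 τ (-x) = - theta1 τ x := by
  unfold theta1
  rw [← tsum_neg]
  have := (Equiv.tsum_eq (Equiv.subLeft (-1 : ℤ))
    (fun k : ℤ => Complex.exp ((Real.pi : ℂ) * Complex.I * τ * ((k : ℂ) + 1/2)^2 +
      2 * (Real.pi : ℂ) * Complex.I * (-x + 1/2) * ((k : ℂ) + 1/2)))).symm
  rw [this]
  refine tsum_congr fun k => ?_
  have e1 : ((Equiv.subLeft (-1 : ℤ)) k : ℂ) = -1 - (k : ℂ) := by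
    simp [Equiv.subLeft]
  rw [e1]
  have hA : (Real.pi : ℂ) * Complex.I * τ * ((-1 - (k : ℂ)) + 1/2)^2 +
      2 * (Real.pi : ℂ) * Complex.I * (-x + 1/2) * ((-1 - (k : ℂ)) + 1/2)
      = ((Real.pi : ℂ) * Complex.I * τ * ((k : ℂ) + 1/2)^2 +
        2 * (Real.pi : ℂ) * Complex.I * (x + 1/2) * ((k : ℂ) + 1/2))
        + ((-k - 1 : ℤ) : ℂ) * (2 * (Real.pi : ℂ) * Complex.I) + (Real.pi : ℂ) * Complex.I := by
    push_cast; ring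
  rw [hA, Complex.exp_add, Complex.exp_add, Complex.exp_int_mul_two_pi_mul_I,
    Complex.exp_pi_mul_I]
  ring

lemma theta1_zero (τ : ℂ) : theta1 τ 0 = 0 := by
  have h := theta1_neg τ 0
  rw [neg_zero] at h
  have h2 : (2 : ℂ) * theta1 τ 0 = 0 := by linear_combination h
  exact (mul_eq_zero.mp h2).resolve_left two_ne_zero

/-- Lemma 3.1: any entire solution Ψ of the difference Lamé equation
satisfies Ψ(jη) = Ψ(−jη) for 1 ≤ j ≤ ℓ. -/
theorem diff_lame_entire_symmetry
    (τ : ℂ) (hτ : 0 < τ.im) (ℓ : ℕ) (hℓ : 0 < ℓ) (η E : ℂ)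
    (hη : ∀ m : ℕ, 1 ≤ m → m ≤ ℓ → theta1 τ (2 * (m : ℂ) * η) ≠ 0)
    (Ψ : ℂ → ℂ) (hent : Differentiable ℂ Ψ)
    (heq : ∀ x : ℂ,
      theta1 τ (2*x - 2*(ℓ : ℂ)*η) * Ψ (x + η) + theta1 τ (2*x + 2*(ℓ : ℂ)*η) * Ψ (x - η)
        = E * theta1 τ (2*x) * Ψ x) :
    ∀ j : ℕ, 1 ≤ j → j ≤ ℓ → Ψ ((j : ℂ) * η) = Ψ (-((j : ℂ) * η)) := by
  set D : ℂ → ℂ := fun x => Ψ x - Ψ (-x) with hDdef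
  have hD : ∀ x : ℂ,
      theta1 τ (2*x - 2*(ℓ : ℂ)*η) * D (x + η) + theta1 τ (2*x + 2*(ℓ : ℂ)*η) * D (x - η)
        = E * theta1 τ (2*x) * D x := by
    intro x
    have h1 := heq x
    have h2 := heq (-x)
    rw [show 2*(-x) - 2*(ℓ : ℂ)*η = -(2*x + 2*(ℓ : ℂ)*η) by ring,
      show 2*(-x) + 2*(ℓ : ℂ)*η = -(2*x - 2*(ℓ : ℂ)*η) by ring,
      show 2*(-x) = -(2*x) by ring, theta1_neg, theta1_neg, theta1_neg,
      show -x + η = -(x - η) by ring, show -x - η = -(x + η) by ring] at h2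
    simp only [hDdef]
    have : -(x + η) = -x - η := by ring
    linear_combination h1 + h2
  have hDodd : ∀ x : ℂ, D (-x) = - D x := by
    intro x; simp only [hDdef, neg_neg]; ring
  have key : ∀ m : ℕ, m ≤ ℓ → D ((m : ℂ) * η) = 0 := by
    intro m
    induction m using Nat.strong_induction_on with
    | _ m ih =>
      match m with
      | 0 =>
        intro _
        simp only [hDdef, Nat.cast_zero, zero_mul, neg_zero, sub_self]
      | 1 =>
        intro _
        have h := hD 0
        rw [show (2 : ℂ)*0 - 2*(ℓ : ℂ)*η = -(2*(ℓ : ℂ)*η) by ring, theta1_neg,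
          show (2 : ℂ)*0 = 0 by ring, theta1_zero,
          show (0 : ℂ) + 2*(ℓ : ℂ)*η = 2*(ℓ : ℂ)*η by ring,
          show (0 : ℂ) + η = η by ring, show (0 : ℂ) - η = -η by ring, hDodd] at h
        have hθ : theta1 τ (2 * (ℓ : ℂ) * η) ≠ 0 := hη ℓ hℓ le_rfl
        have h' : theta1 τ (2*(ℓ : ℂ)*η) * D η = 0 := by linear_combination (-1/2 : ℂ) * h
        have : D η = 0 := by
          rcases mul_eq_zero.mp h' with h | h
          · exact absurd h hθ
          · exact h
        rw [Nat.cast_one, one_mul]; exact this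
      | (m + 2) =>
        intro hle
        have h1 : D (((m : ℂ) + 1) * η) = 0 := by
          have := ih (m + 1) (by omega) (by omega)
          rwa [Nat.cast_add, Nat.cast_one] at this
        have h0 : D ((m : ℂ) * η) = 0 := ih m (by omega) (by omega)
        have h := hD (((m : ℂ) + 1) * η)
        rw [show ((m : ℂ) + 1) * η + η = ((m : ℂ) + 2) * η by ring,
          show ((m : ℂ) + 1) * η - η = (m : ℂ) * η by ring, h0, h1] at h
        -- the first theta coefficient is -θ1(2(ℓ-m-1)η) ≠ 0
        have hn : (1 : ℕ) ≤ ℓ - (m + 1) := by omega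
        have hn' : ℓ - (m + 1) ≤ ℓ := by omega
        have hθ : theta1 τ (2 * ((ℓ - (m + 1) : ℕ) : ℂ) * η) ≠ 0 := hη _ hn hn'
        have hcast : ((ℓ - (m + 1) : ℕ) : ℂ) = (ℓ : ℂ) - (m : ℂ) - 1 := by
          have : ((ℓ - (m + 1) : ℕ) : ℂ) = (ℓ : ℂ) - ((m + 1 : ℕ) : ℂ) := by
            rw [Nat.cast_sub (by omega)]
          rw [this]; push_cast; ring
        rw [hcast] at hθ
        have harg : 2*(((m : ℂ) + 1) * η) - 2*(ℓ : ℂ)*η = -(2 * ((ℓ : ℂ) - (m : ℂ) - 1) * η) := by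
          ring
        rw [harg, theta1_neg] at h
        simp only [mul_zero, add_zero, neg_mul, neg_eq_zero] at h
        have hres : D (((m : ℂ) + 2) * η) = 0 := by
          rcases mul_eq_zero.mp h with h | h
          · exact absurd h hθ
          · exact h
        have : ((m + 2 : ℕ) : ℂ) = (m : ℂ) + 2 := by push_cast; ring
        rw [this]; exact hres
  intro j _ hj
  have := key j hj
  simp only [hDdef] at this
  exact sub_eq_zero.mp this
end

section
/- Let ℓ be a positive integer, N = ℓ(ℓ+1)/2, τ ∈ ℂ with Im τ > 0, and η ∈ ℂ with θ1(2nη) ≠ 0 for all integers 1 ≤ n ≤ 2ℓ. If ζ ∈ ℂ and K ∈ ℂ with K ≠ 0 satisfy Σ_{j=0}^{N} (−1)^j C_j^{(ℓ)} θ1(ζ−4jη) K^{2(N−j)} = 0, then also Σ_{j=0}^{N} (−1)^j C_j^{(ℓ)} θ1((4Nη−ζ)−4jη) K^{−2(N−j)} = 0; that is, the curve defined by this equation is invariant under the involution (ζ, K) ↦ (4Nη−ζ, K^{−1}). -/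
open Complex Finset

/-- The coefficient C_j^{(ℓ)}(η) of the spectral curve equation (Proposition 3.1). -/
noncomputable def Ccoef (τ η : ℂ) (ℓ j : ℕ) : ℂ :=
  ∑ J ∈ (Finset.Icc 1 ℓ).powerset.filter (fun J => J.sum id = j),
    (-1 : ℂ)^(J.card * ℓ + J.card * (J.card - 1) / 2 + j) *
    ∏ k ∈ J, ∏ k' ∈ Finset.Icc 1 ℓ \ J,
      en τ η ((k : ℤ) + (k' : ℤ)) / en τ η ((k : ℤ) - (k' : ℤ))


/-! ### Auxiliary lemmas for the hyperelliptic involution -/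

lemma theta1_odd (τ x : ℂ) : theta1 τ (-x) = -theta1 τ x := by
  unfold theta1
  rw [← tsum_neg]
  rw [← (Equiv.subLeft (-1 : ℤ)).tsum_eq (fun k : ℤ =>
    Complex.exp ((Real.pi : ℂ) * Complex.I * τ * ((k : ℂ) + 1/2)^2 +
    2 * (Real.pi : ℂ) * Complex.I * (-x + 1/2) * ((k : ℂ) + 1/2)))]
  refine tsum_congr fun k => ?_
  simp only [Equiv.subLeft_apply]
  rw [show ((Real.pi : ℂ) * Complex.I * τ * (((-1 - k : ℤ) : ℂ) + 1/2)^2 +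
      2 * (Real.pi : ℂ) * Complex.I * (-x + 1/2) * (((-1 - k : ℤ) : ℂ) + 1/2))
      = ((Real.pi : ℂ) * Complex.I * τ * ((k : ℂ) + 1/2)^2 +
        2 * (Real.pi : ℂ) * Complex.I * (x + 1/2) * ((k : ℂ) + 1/2))
        + ((-k : ℤ) : ℂ) * (2 * (Real.pi : ℂ) * Complex.I) + (-((Real.pi:ℂ) * Complex.I)) by
    push_cast; ring]
  rw [Complex.exp_add, Complex.exp_add, Complex.exp_int_mul_two_pi_mul_I, Complex.exp_neg,
    Complex.exp_pi_mul_I]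
  norm_num

lemma en_neg (τ η : ℂ) (n : ℤ) : en τ η (-n) = -en τ η n := by
  unfold en
  rw [show 2 * ((-n : ℤ) : ℂ) * η = -(2 * (n : ℂ) * η) by push_cast; ring, theta1_odd]

lemma I_pow_congr {x y : ℕ} (h : (4:ℤ) ∣ (x:ℤ) - (y:ℤ)) : (I:ℂ)^x = I^y := by
  have hx : x % 4 = y % 4 := by omega
  conv_lhs => rw [← Nat.div_add_mod x 4]
  conv_rhs => rw [← Nat.div_add_mod y 4]
  rw [pow_add, pow_add, pow_mul, pow_mul, Complex.I_pow_four, one_pow, one_pow, hx]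

lemma mm_even (m : ℕ) : ∃ p, m*(m-1) = 2*p := by
  rcases Nat.even_or_odd m with h | h
  · obtain ⟨p, hp⟩ := h
    exact ⟨p*(m-1), by rw [hp]; ring⟩
  · obtain ⟨k, hk⟩ := h
    exact ⟨m*k, by rw [hk, Nat.add_sub_cancel]; ring⟩

lemma neg_one_pow_half (m : ℕ) : ((-1:ℂ))^(m*(m-1)/2) = I^(m*(m-1)) := by
  obtain ⟨p, hp⟩ := mm_even m
  rw [hp, Nat.mul_div_cancel_left _ two_pos, pow_mul, Complex.I_sq]

lemma neg_one_pow_I (n : ℕ) : ((-1:ℂ))^n = I^(2*n) := by rw [pow_mul, Complex.I_sq]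

lemma castmm (m : ℕ) : ((m*(m-1) : ℕ) : ℤ) = (m:ℤ)*((m:ℤ)-1) := by
  cases m with
  | zero => simp
  | succ n => simp only [Nat.succ_sub_one]; push_cast; ring

lemma sign_eq (ℓ a j N : ℕ) (ha : a ≤ ℓ) (hj : j ≤ N) (hN : 2*N = ℓ*(ℓ+1)) :
    ((-1:ℂ))^(a*ℓ + a*(a-1)/2 + (N-j))
      = (-1)^((ℓ-a)*ℓ + (ℓ-a)*((ℓ-a)-1)/2 + j) * (-1)^((ℓ-a)*a) := by
  rw [pow_add, pow_add, pow_add, pow_add, neg_one_pow_half, neg_one_pow_half,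
      neg_one_pow_I (a*ℓ), neg_one_pow_I (N-j), neg_one_pow_I ((ℓ-a)*ℓ), neg_one_pow_I j,
      neg_one_pow_I ((ℓ-a)*a), ← pow_add, ← pow_add, ← pow_add, ← pow_add, ← pow_add]
  apply I_pow_congr
  obtain ⟨p, hp⟩ := Int.even_mul_succ_self ((ℓ:ℤ)-1)
  obtain ⟨q, hq⟩ := Int.even_mul_succ_self ((a:ℤ)-1)
  have hN' : 2*(N:ℤ) = (ℓ:ℤ)*((ℓ:ℤ)+1) := by exact_mod_cast hN
  have h1 := castmm a
  have h2 := castmm (ℓ - a)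
  refine ⟨(a:ℤ)*(ℓ:ℤ) - p + q - (j:ℤ), ?_⟩
  push_cast [h1, h2, Nat.cast_sub ha, Nat.cast_sub hj]
  linear_combination (-2)*hp + 2*hq + hN'

lemma sum_Icc_id (ℓ : ℕ) : ∑ i ∈ Finset.Icc 1 ℓ, i = ℓ*(ℓ+1)/2 := by
  induction ℓ with
  | zero => simp
  | succ n ih =>
    rw [Finset.sum_Icc_succ_top (by omega : 1 ≤ n+1), ih]
    have h : (n+1)*(n+1+1) = n*(n+1) + 2*(n+1) := by ring
    omega

lemma prod_swap' (τ η : ℂ) (S J : Finset ℕ) :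
    (∏ k ∈ S, ∏ k' ∈ J, en τ η ((k:ℤ)+(k':ℤ)) / en τ η ((k:ℤ)-(k':ℤ)))
      = (-1:ℂ)^(S.card * J.card) *
        ∏ k ∈ J, ∏ k' ∈ S, en τ η ((k:ℤ)+(k':ℤ)) / en τ η ((k:ℤ)-(k':ℤ)) := by
  rw [Finset.prod_comm]
  have h : ∀ y ∈ J, (∏ x ∈ S, en τ η ((x:ℤ)+(y:ℤ)) / en τ η ((x:ℤ)-(y:ℤ)))
      = (-1:ℂ)^S.card * ∏ x ∈ S, en τ η ((y:ℤ)+(x:ℤ)) / en τ η ((y:ℤ)-(x:ℤ)) := by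
    intro y _
    have h2 : ∀ x ∈ S, en τ η ((x:ℤ)+(y:ℤ)) / en τ η ((x:ℤ)-(y:ℤ))
        = (-1) * (en τ η ((y:ℤ)+(x:ℤ)) / en τ η ((y:ℤ)-(x:ℤ))) := by
      intro x _
      rw [show (x:ℤ)+(y:ℤ) = (y:ℤ)+(x:ℤ) by ring,
          show (x:ℤ)-(y:ℤ) = -((y:ℤ)-(x:ℤ)) by ring, en_neg, div_neg]
      ring
    rw [Finset.prod_congr rfl h2, Finset.prod_mul_distrib, Finset.prod_const]
  rw [Finset.prod_congr rfl h, Finset.prod_mul_distrib, Finset.prod_const, ← pow_mul]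

lemma Ccoef_symm (τ η : ℂ) (ℓ N j : ℕ) (hN : N = ℓ*(ℓ+1)/2) (hj : j ≤ N) :
    Ccoef τ η ℓ (N - j) = Ccoef τ η ℓ j := by
  have hNN : 2*N = ℓ*(ℓ+1) := by
    obtain ⟨p, hp⟩ := Nat.even_mul_succ_self ℓ
    omega
  have hIcc : ∑ i ∈ Finset.Icc 1 ℓ, i = N := by rw [hN]; exact sum_Icc_id ℓ
  unfold Ccoef
  refine Finset.sum_nbij' (i := fun J => Finset.Icc 1 ℓ \ J)
    (j := fun J => Finset.Icc 1 ℓ \ J) ?_ ?_ ?_ ?_ ?_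
  · intro J hJ
    simp only [Finset.mem_filter, Finset.mem_powerset] at hJ ⊢
    obtain ⟨hsub, hsum⟩ := hJ
    have := Finset.sum_sdiff (f := id) hsub
    simp only [id] at this hsum ⊢
    exact ⟨Finset.sdiff_subset, by omega⟩
  · intro J hJ
    simp only [Finset.mem_filter, Finset.mem_powerset] at hJ ⊢
    obtain ⟨hsub, hsum⟩ := hJ
    have := Finset.sum_sdiff (f := id) hsub
    simp only [id] at this hsum ⊢
    exact ⟨Finset.sdiff_subset, by omega⟩
  · intro J hJ
    simp only [Finset.mem_filter, Finset.mem_powerset] at hJ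
    exact Finset.sdiff_sdiff_eq_self hJ.1
  · intro J hJ
    simp only [Finset.mem_filter, Finset.mem_powerset] at hJ
    exact Finset.sdiff_sdiff_eq_self hJ.1
  · intro J hJ
    simp only [Finset.mem_filter, Finset.mem_powerset] at hJ
    obtain ⟨hsub, hsum⟩ := hJ
    rw [Finset.sdiff_sdiff_eq_self hsub]
    have hcard : (Finset.Icc 1 ℓ \ J).card = ℓ - J.card := by
      rw [Finset.card_sdiff_of_subset hsub, Nat.card_Icc]; omega
    have ha : J.card ≤ ℓ := by
      have := Finset.card_le_card hsub
      rw [Nat.card_Icc] at this; omega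
    rw [prod_swap' τ η (Finset.Icc 1 ℓ \ J) J, hcard,
        sign_eq ℓ J.card j N ha hj hNN]
    ring

/-- the spectral curve Γ_e is invariant under the hyperelliptic
involution (ζ, K) ↦ (4Nη − ζ, K⁻¹). -/
theorem spectral_curve_hyperelliptic_involution
    (τ : ℂ) (hτ : 0 < τ.im) (ℓ : ℕ) (hℓ : 0 < ℓ) (N : ℕ) (hN : N = ℓ*(ℓ+1)/2) (η : ℂ)
    (hη : ∀ n : ℕ, 1 ≤ n → n ≤ 2*ℓ → theta1 τ (2*(n : ℂ)*η) ≠ 0)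
    (ζ K : ℂ) (hK : K ≠ 0)
    (hcurve : ∑ j ∈ Finset.range (N + 1),
        (-1 : ℂ)^j * Ccoef τ η ℓ j * theta1 τ (ζ - 4*(j : ℂ)*η) * K ^ (2*(N - j)) = 0) :
    ∑ j ∈ Finset.range (N + 1),
        (-1 : ℂ)^j * Ccoef τ η ℓ j * theta1 τ ((4*(N : ℂ)*η - ζ) - 4*(j : ℂ)*η)
          * K⁻¹ ^ (2*(N - j)) = 0 := by
  rw [← Finset.sum_range_reflect]
  have hstep : ∀ j ∈ Finset.range (N+1),
      (-1 : ℂ)^(N + 1 - 1 - j) * Ccoef τ η ℓ (N + 1 - 1 - j) *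
        theta1 τ ((4*(N : ℂ)*η - ζ) - 4*((N + 1 - 1 - j : ℕ) : ℂ)*η) *
        K⁻¹ ^ (2*(N - (N + 1 - 1 - j)))
      = ((-1 : ℂ)^(N+1) * (K⁻¹)^(2*N)) *
        ((-1 : ℂ)^j * Ccoef τ η ℓ j * theta1 τ (ζ - 4*(j : ℂ)*η) * K ^ (2*(N - j))) := by
    intro j hjr
    have hj : j ≤ N := by
      have := Finset.mem_range.mp hjr; omega
    have h1 : N + 1 - 1 - j = N - j := by omega
    have h2 : N - (N - j) = j := by omega
    rw [h1, h2, Ccoef_symm τ η ℓ N j hN hj,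
        show (4*(N : ℂ)*η - ζ) - 4*((N - j : ℕ) : ℂ)*η = -(ζ - 4*(j : ℂ)*η) by
          push_cast [Nat.cast_sub hj]; ring,
        theta1_odd]
    have hs : (-1:ℂ)^(N-j) * (-1:ℂ)^j = (-1:ℂ)^N := by
      rw [← pow_add]; congr 1; omega
    have hk : K ^ (2*(N-j)) * K ^ (2*j) = K ^ (2*N) := by
      rw [← pow_add]; congr 1; omega
    have hKn : K ^ (2*N) ≠ 0 := pow_ne_zero _ hK
    have hKj : K ^ (2*j) ≠ 0 := pow_ne_zero _ hK
    have hb : (-1:ℂ)^j * (-1:ℂ)^j = 1 := by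
      rw [← pow_add, ← two_mul, pow_mul]; norm_num
    have hinv : (K ^ (2*j))⁻¹ = K ^ (2*(N-j)) * (K ^ (2*N))⁻¹ := by
      field_simp
      linear_combination -hk
    rw [inv_pow, inv_pow, pow_succ, hinv]
    linear_combination
      (Ccoef τ η ℓ j * theta1 τ (ζ - 4*(j:ℂ)*η) * K^(2*(N-j)) * (K^(2*N))⁻¹ * (-1:ℂ)^j) * -hs
      + (Ccoef τ η ℓ j * theta1 τ (ζ - 4*(j:ℂ)*η) * K^(2*(N-j)) * (K^(2*N))⁻¹ * (-1:ℂ)^(N-j)) * hb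
  rw [Finset.sum_congr rfl hstep, ← Finset.mul_sum, hcurve, mul_zero]
end

section
/- Let ℓ be a positive integer, τ ∈ ℂ with Im τ > 0, and η ∈ ℂ with θ1(2nη) ≠ 0 for all integers 1 ≤ n ≤ 2ℓ. If ζ ∈ ℂ, K ∈ ℂ with K ≠ 0, and E ∈ ℂ satisfy both equations Σ_{j=0}^{ℓ} (−1)^j K^{−j} θ1(ζ−2jη) [ℓ over j] A_{jη}(E) = 0 and Σ_{j=0}^{ℓ+1} (−1)^j K^{−j} θ1(ζ−2jη) θ1(2(j−1)η) [ℓ+1 over j] A_{(j−1)η}(E) = 0, then the triple (ζ, −K, −E) also satisfies both equations. -/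
open Complex Finset

lemma Apoly_neg (τ η : ℂ) (ℓ : ℕ) (E : ℂ) :
    ∀ s, Apoly τ η ℓ (-E) s = (-1) ^ s * Apoly τ η ℓ E s
  | 0 => by simp [Apoly]
  | 1 => by simp only [Apoly]; ring
  | (s + 2) => by
      rw [Apoly, Apoly, Apoly_neg τ η ℓ E (s + 1), Apoly_neg τ η ℓ E s]
      ring

/-- the spectral curve admits the involution (ζ, K, E) ↦ (ζ, −K, −E). -/
theorem spectral_curve_reflection_involution
    (τ : ℂ) (hτ : 0 < τ.im) (ℓ : ℕ) (hℓ : 0 < ℓ) (η : ℂ)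
    (hη : ∀ n : ℕ, 1 ≤ n → n ≤ 2*ℓ → theta1 τ (2*(n : ℂ)*η) ≠ 0)
    (ζ K E : ℂ) (hK : K ≠ 0)
    (h1 : ∑ j ∈ Finset.range (ℓ + 1), (-1 : ℂ)^j * K⁻¹^j * theta1 τ (ζ - 2*(j : ℂ)*η)
        * ebinom τ η ℓ j * Apoly τ η ℓ E (ℓ - j) = 0)
    (h2 : ∑ j ∈ Finset.range (ℓ + 2), (-1 : ℂ)^j * K⁻¹^j * theta1 τ (ζ - 2*(j : ℂ)*η)
        * theta1 τ (2*((j : ℂ) - 1)*η) * ebinom τ η (ℓ + 1) j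
        * Apoly τ η ℓ E (ℓ - ((j : ℤ) - 1).natAbs) = 0) :
    (∑ j ∈ Finset.range (ℓ + 1), (-1 : ℂ)^j * (-K)⁻¹^j * theta1 τ (ζ - 2*(j : ℂ)*η)
        * ebinom τ η ℓ j * Apoly τ η ℓ (-E) (ℓ - j) = 0)
    ∧ (∑ j ∈ Finset.range (ℓ + 2), (-1 : ℂ)^j * (-K)⁻¹^j * theta1 τ (ζ - 2*(j : ℂ)*η)
        * theta1 τ (2*((j : ℂ) - 1)*η) * ebinom τ η (ℓ + 1) j
        * Apoly τ η ℓ (-E) (ℓ - ((j : ℤ) - 1).natAbs) = 0) := by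
  constructor
  · have key : ∑ j ∈ Finset.range (ℓ + 1), (-1 : ℂ)^j * (-K)⁻¹^j * theta1 τ (ζ - 2*(j : ℂ)*η)
        * ebinom τ η ℓ j * Apoly τ η ℓ (-E) (ℓ - j)
        = (-1 : ℂ)^ℓ * ∑ j ∈ Finset.range (ℓ + 1), (-1 : ℂ)^j * K⁻¹^j
            * theta1 τ (ζ - 2*(j : ℂ)*η) * ebinom τ η ℓ j * Apoly τ η ℓ E (ℓ - j) := by
      rw [Finset.mul_sum]
      refine Finset.sum_congr rfl fun j hj => ?_
      have hjle : j ≤ ℓ := Nat.lt_succ_iff.mp (Finset.mem_range.mp hj)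
      rw [Apoly_neg, inv_neg, neg_pow]
      have e2 : ((-1 : ℂ))^(ℓ - j) * (-1)^j = (-1)^ℓ := by
        rw [← pow_add, Nat.sub_add_cancel hjle]
      linear_combination (K⁻¹^j * theta1 τ (ζ - 2*(j : ℂ)*η) * ebinom τ η ℓ j *
        Apoly τ η ℓ E (ℓ - j) * (-1 : ℂ)^j) * e2
    rw [key, h1, mul_zero]
  · have key : ∑ j ∈ Finset.range (ℓ + 2), (-1 : ℂ)^j * (-K)⁻¹^j * theta1 τ (ζ - 2*(j : ℂ)*η)
        * theta1 τ (2*((j : ℂ) - 1)*η) * ebinom τ η (ℓ + 1) j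
        * Apoly τ η ℓ (-E) (ℓ - ((j : ℤ) - 1).natAbs)
        = (-1 : ℂ)^(ℓ+1) * ∑ j ∈ Finset.range (ℓ + 2), (-1 : ℂ)^j * K⁻¹^j
            * theta1 τ (ζ - 2*(j : ℂ)*η) * theta1 τ (2*((j : ℂ) - 1)*η)
            * ebinom τ η (ℓ + 1) j * Apoly τ η ℓ E (ℓ - ((j : ℤ) - 1).natAbs) := by
      rw [Finset.mul_sum]
      refine Finset.sum_congr rfl fun j hj => ?_
      have hjle : j ≤ ℓ + 1 := Nat.lt_succ_iff.mp (Finset.mem_range.mp hj)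
      set m : ℕ := ℓ - ((j : ℤ) - 1).natAbs with hm
      rw [Apoly_neg, inv_neg, neg_pow]
      have e2 : ((-1 : ℂ))^m * (-1)^j = (-1)^(ℓ+1) := by
        rw [← pow_add]
        have : m + j = ℓ + 1 ∨ m + j + 2 = ℓ + 1 := by omega
        rcases this with h | h
        · rw [h]
        · rw [← h, pow_add]; ring
      linear_combination (K⁻¹^j * theta1 τ (ζ - 2*(j : ℂ)*η) * theta1 τ (2*((j : ℂ) - 1)*η)
        * ebinom τ η (ℓ + 1) j * Apoly τ η ℓ E m * (-1 : ℂ)^j) * e2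
    rw [key, h2, mul_zero]
end

section
/- Let ℓ be a positive integer, τ ∈ ℂ with Im τ > 0, and η ∈ ℂ with θ1(2nη) ≠ 0 for all integers 1 ≤ n ≤ 2ℓ. If ζ ∈ ℂ, K ∈ ℂ with K ≠ 0, and E ∈ ℂ satisfy both equations Σ_{j=0}^{ℓ} (−1)^j K^{−j} θ1(ζ−2jη) [ℓ over j] A_{jη}(E) = 0 and Σ_{j=0}^{ℓ+1} (−1)^j K^{−j} θ1(ζ−2jη) θ1(2(j−1)η) [ℓ+1 over j] A_{(j−1)η}(E) = 0, then the triple (ζ+τ, K·e^{4πiη}, E) also satisfies both equations. -/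
open Complex Finset

lemma theta1_add_tau (τ x : ℂ) :
    theta1 τ (x + τ) =
      -Complex.exp (-(Real.pi : ℂ) * Complex.I * τ - 2 * (Real.pi : ℂ) * Complex.I * x) *
        theta1 τ x := by
  unfold theta1
  rw [← tsum_mul_left]
  have h := (Equiv.addRight (1 : ℤ)).tsum_eq (fun k : ℤ =>
    -Complex.exp (-(Real.pi : ℂ) * Complex.I * τ - 2 * (Real.pi : ℂ) * Complex.I * x) *
      Complex.exp ((Real.pi : ℂ) * Complex.I * τ * ((k : ℂ) + 1/2)^2 +
        2 * (Real.pi : ℂ) * Complex.I * (x + 1/2) * ((k : ℂ) + 1/2)))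
  rw [← h]
  refine tsum_congr fun k => ?_
  simp only [Equiv.coe_addRight]
  push_cast
  have hm : (-1 : ℂ) = Complex.exp (-((Real.pi : ℂ) * Complex.I)) := by
    rw [Complex.exp_neg, Complex.exp_pi_mul_I]; norm_num
  rw [show -Complex.exp (-(Real.pi : ℂ) * Complex.I * τ - 2 * (Real.pi : ℂ) * Complex.I * x) =
      Complex.exp (-((Real.pi : ℂ) * Complex.I)) *
        Complex.exp (-(Real.pi : ℂ) * Complex.I * τ - 2 * (Real.pi : ℂ) * Complex.I * x) by
      rw [← hm]; ring]
  rw [← Complex.exp_add, ← Complex.exp_add]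
  congr 1
  ring

lemma key_shift (τ η ζ K : ℂ) (j : ℕ) :
    (K * Complex.exp (4 * (Real.pi : ℂ) * Complex.I * η))⁻¹ ^ j *
      theta1 τ ((ζ + τ) - 2 * (j : ℂ) * η) =
    (-Complex.exp (-(Real.pi : ℂ) * Complex.I * τ - 2 * (Real.pi : ℂ) * Complex.I * ζ)) *
      (K⁻¹ ^ j * theta1 τ (ζ - 2 * (j : ℂ) * η)) := by
  have e1 : (Complex.exp (4 * (Real.pi : ℂ) * Complex.I * η))⁻¹ ^ j *
      Complex.exp (-(Real.pi : ℂ) * Complex.I * τ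
        - 2 * (Real.pi : ℂ) * Complex.I * (ζ - 2 * (j : ℂ) * η)) =
      Complex.exp (-(Real.pi : ℂ) * Complex.I * τ - 2 * (Real.pi : ℂ) * Complex.I * ζ) := by
    rw [← Complex.exp_neg, ← Complex.exp_nat_mul, ← Complex.exp_add]
    congr 1
    ring
  rw [show (ζ + τ) - 2 * (j : ℂ) * η = (ζ - 2 * (j : ℂ) * η) + τ by ring, theta1_add_tau,
    mul_inv, mul_pow]
  linear_combination (-(K⁻¹ ^ j * theta1 τ (ζ - 2 * (j : ℂ) * η))) * e1

/-- the spectral curve is invariant under the lattice transformation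
(ζ, K) ↦ (ζ + τ, K·e^{4πiη}). -/
theorem spectral_curve_lattice_invariance
    (τ : ℂ) (hτ : 0 < τ.im) (ℓ : ℕ) (hℓ : 0 < ℓ) (η : ℂ)
    (hη : ∀ n : ℕ, 1 ≤ n → n ≤ 2*ℓ → theta1 τ (2*(n : ℂ)*η) ≠ 0)
    (ζ K E : ℂ) (hK : K ≠ 0)
    (h1 : ∑ j ∈ Finset.range (ℓ + 1), (-1 : ℂ)^j * K⁻¹^j * theta1 τ (ζ - 2*(j : ℂ)*η)
        * ebinom τ η ℓ j * Apoly τ η ℓ E (ℓ - j) = 0)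
    (h2 : ∑ j ∈ Finset.range (ℓ + 2), (-1 : ℂ)^j * K⁻¹^j * theta1 τ (ζ - 2*(j : ℂ)*η)
        * theta1 τ (2*((j : ℂ) - 1)*η) * ebinom τ η (ℓ + 1) j
        * Apoly τ η ℓ E (ℓ - ((j : ℤ) - 1).natAbs) = 0) :
    (∑ j ∈ Finset.range (ℓ + 1), (-1 : ℂ)^j
        * (K * Complex.exp (4*(Real.pi : ℂ)*Complex.I*η))⁻¹^j
        * theta1 τ ((ζ + τ) - 2*(j : ℂ)*η)
        * ebinom τ η ℓ j * Apoly τ η ℓ E (ℓ - j) = 0)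
    ∧ (∑ j ∈ Finset.range (ℓ + 2), (-1 : ℂ)^j
        * (K * Complex.exp (4*(Real.pi : ℂ)*Complex.I*η))⁻¹^j
        * theta1 τ ((ζ + τ) - 2*(j : ℂ)*η)
        * theta1 τ (2*((j : ℂ) - 1)*η) * ebinom τ η (ℓ + 1) j
        * Apoly τ η ℓ E (ℓ - ((j : ℤ) - 1).natAbs) = 0) := by
  set C := -Complex.exp (-(Real.pi : ℂ) * Complex.I * τ - 2 * (Real.pi : ℂ) * Complex.I * ζ) with hC
  constructor
  · have : (∑ j ∈ Finset.range (ℓ + 1), (-1 : ℂ)^j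
        * (K * Complex.exp (4*(Real.pi : ℂ)*Complex.I*η))⁻¹^j
        * theta1 τ ((ζ + τ) - 2*(j : ℂ)*η)
        * ebinom τ η ℓ j * Apoly τ η ℓ E (ℓ - j))
        = C * ∑ j ∈ Finset.range (ℓ + 1), (-1 : ℂ)^j * K⁻¹^j * theta1 τ (ζ - 2*(j : ℂ)*η)
        * ebinom τ η ℓ j * Apoly τ η ℓ E (ℓ - j) := by
      rw [Finset.mul_sum]
      refine Finset.sum_congr rfl fun j _ => ?_
      linear_combination ((-1 : ℂ)^j * ebinom τ η ℓ j * Apoly τ η ℓ E (ℓ - j)) *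
        key_shift τ η ζ K j
    rw [this, h1, mul_zero]
  · have : (∑ j ∈ Finset.range (ℓ + 2), (-1 : ℂ)^j
        * (K * Complex.exp (4*(Real.pi : ℂ)*Complex.I*η))⁻¹^j
        * theta1 τ ((ζ + τ) - 2*(j : ℂ)*η)
        * theta1 τ (2*((j : ℂ) - 1)*η) * ebinom τ η (ℓ + 1) j
        * Apoly τ η ℓ E (ℓ - ((j : ℤ) - 1).natAbs))
        = C * ∑ j ∈ Finset.range (ℓ + 2), (-1 : ℂ)^j * K⁻¹^j * theta1 τ (ζ - 2*(j : ℂ)*η)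
        * theta1 τ (2*((j : ℂ) - 1)*η) * ebinom τ η (ℓ + 1) j
        * Apoly τ η ℓ E (ℓ - ((j : ℤ) - 1).natAbs) := by
      rw [Finset.mul_sum]
      refine Finset.sum_congr rfl fun j _ => ?_
      linear_combination ((-1 : ℂ)^j * theta1 τ (2*((j : ℂ) - 1)*η) * ebinom τ η (ℓ + 1) j
        * Apoly τ η ℓ E (ℓ - ((j : ℤ) - 1).natAbs)) * key_shift τ η ζ K j
    rw [this, h2, mul_zero]
end

section
/- Let ℓ be a positive integer, τ ∈ ℂ with Im τ > 0, η ∈ ℂ with θ1(2nη) ≠ 0 for all integers 1 ≤ n ≤ 2ℓ, ζ ∈ ℂ with θ1(ζ) ≠ 0, μ ∈ ℂ with K = e^{μη}, s_1,…,s_ℓ ∈ ℂ, and fix an integer 1 ≤ m ≤ ℓ. Define Ψ(x) = e^{μx}·(∏_{j=1}^{ℓ} θ1(2x−2jη))·Σ_{n=1}^{ℓ} s_n·Φ(2x−2nη, ζ) for all x at which θ1(2x−2nη) ≠ 0 for every 1 ≤ n ≤ ℓ. Then the limit of Ψ(x) as x → mη exists and equals K^m s_m ∏_{j=1, j≠m}^{ℓ}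 θ1(2(m−j)η); moreover this limit equals Ψ(−mη) if and only if K^m s_m = (−1)^ℓ K^{−m} θ1(4mη) (∏_{j=1, j≠m}^{ℓ} θ1(2(m+j)η)/θ1(2(m−j)η)) · Σ_{n=1}^{ℓ} Φ(−2(m+n)η, ζ) s_n. -/
open Complex Finset

/-- The double-Bloch ansatz Ψ(x) = e^{μx}·(∏_{j=1}^ℓ θ₁(2x−2jη))·Σ_{n=1}^ℓ s_n Φ(2x−2nη, ζ). -/
noncomputable def PsiAnsatz (τ η ζ μ : ℂ) (ℓ : ℕ) (s : ℕ → ℂ) (x : ℂ) : ℂ :=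
  Complex.exp (μ * x) * (∏ j ∈ Finset.Icc 1 ℓ, theta1 τ (2*x - 2*(j : ℂ)*η)) *
    ∑ n ∈ Finset.Icc 1 ℓ, s n * Phi τ (2*x - 2*(n : ℂ)*η) ζ

lemma theta1_eq' (τ x : ℂ) :
    theta1 τ x = Complex.exp ((Real.pi:ℂ)*I*τ/4 + (Real.pi:ℂ)*I*x + (Real.pi:ℂ)*I/2) *
      jacobiTheta₂ (x + 1/2 + τ/2) τ := by
  rw [theta1, jacobiTheta₂, ← tsum_mul_left]
  refine tsum_congr fun k => ?_
  rw [jacobiTheta₂_term, ← Complex.exp_add]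
  congr 1
  ring

lemma theta1_continuous {τ : ℂ} (hτ : 0 < τ.im) : Continuous (theta1 τ) := by
  have h1 : Continuous fun x : ℂ => jacobiTheta₂ (x + 1/2 + τ/2) τ := by
    refine continuous_iff_continuousAt.2 fun x => ?_
    have h := continuousAt_jacobiTheta₂ (x + 1/2 + τ/2) hτ
    exact h.comp (f := fun y : ℂ => (y + 1/2 + τ/2, τ)) (by fun_prop)
  have h2 : Continuous fun x : ℂ =>
      Complex.exp ((Real.pi:ℂ)*I*τ/4 + (Real.pi:ℂ)*I*x + (Real.pi:ℂ)*I/2) := by fun_prop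
  have h3 := h2.mul h1
  convert h3 using 1
  exact funext fun x => theta1_eq' τ x

lemma en_ne_zero {τ η : ℂ} {ℓ : ℕ}
    (hη : ∀ n : ℕ, 1 ≤ n → n ≤ 2*ℓ → theta1 τ (2*(n:ℂ)*η) ≠ 0)
    {n : ℤ} (h1 : n ≠ 0) (h2 : n.natAbs ≤ 2*ℓ) : en τ η n ≠ 0 := by
  have hpos : 0 < n.natAbs := Int.natAbs_pos.mpr h1
  rcases Int.natAbs_eq n with h | h
  · rw [en, h, Int.cast_natCast]
    exact hη n.natAbs hpos h2
  · rw [en, h]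
    simp only [Int.cast_neg, Int.cast_natCast]
    rw [show 2*(-(n.natAbs:ℂ))*η = -(2*(n.natAbs:ℂ)*η) by ring, theta1_neg]
    exact neg_ne_zero.mpr (hη n.natAbs hpos h2)

noncomputable def Gfun (τ η ζ μ : ℂ) (ℓ : ℕ) (s : ℕ → ℂ) (x : ℂ) : ℂ :=
  Complex.exp (μ*x) * ∑ n ∈ Finset.Icc 1 ℓ, s n *
    (theta1 τ (ζ + (2*x - 2*(n:ℂ)*η)) / theta1 τ ζ *
      ∏ j ∈ (Finset.Icc 1 ℓ).erase n, theta1 τ (2*x - 2*(j:ℂ)*η))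

lemma PsiAnsatz_eq_G {τ η ζ μ : ℂ} {ℓ : ℕ} {s : ℕ → ℂ} {x : ℂ}
    (hζ : theta1 τ ζ ≠ 0)
    (hx : ∀ n ∈ Finset.Icc 1 ℓ, theta1 τ (2*x - 2*(n:ℂ)*η) ≠ 0) :
    PsiAnsatz τ η ζ μ ℓ s x = Gfun τ η ζ μ ℓ s x := by
  unfold PsiAnsatz Gfun
  rw [mul_assoc, Finset.mul_sum]
  congr 1
  refine Finset.sum_congr rfl fun n hn => ?_
  rw [← Finset.mul_prod_erase _ _ hn, Phi]
  field_simp [hx n hn]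
  have h' : theta1 τ (2 * (x - (n:ℂ) * η)) ≠ 0 := by
    rw [show 2 * (x - (n:ℂ) * η) = 2*x - 2*(n:ℂ)*η by ring]; exact hx n hn
  generalize theta1 τ (2 * (x - (n:ℂ) * η)) = A at h' ⊢
  rw [show ∀ P S B : ℂ, A * P * S * B / A = A * (P * S * B) / A from fun P S B => by ring,
    mul_div_cancel_left₀ _ h']
/-- the limit of Ψ at x = mη exists and equals
K^m s_m ∏_{j≠m} θ₁(2(m−j)η), and this limit equals Ψ(−mη) iff the m-th equation of
the linear system defining the spectral curve holds. -/
theorem PsiAnsatz_limit_and_gluing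
    (τ : ℂ) (hτ : 0 < τ.im) (ℓ : ℕ) (hℓ : 0 < ℓ) (η : ℂ)
    (hη : ∀ n : ℕ, 1 ≤ n → n ≤ 2*ℓ → theta1 τ (2*(n : ℂ)*η) ≠ 0)
    (ζ : ℂ) (hζ : theta1 τ ζ ≠ 0) (μ K : ℂ) (hK : K = Complex.exp (μ * η))
    (s : ℕ → ℂ) (m : ℕ) (hm1 : 1 ≤ m) (hm2 : m ≤ ℓ) :
    Filter.Tendsto (PsiAnsatz τ η ζ μ ℓ s)
      (nhdsWithin ((m : ℂ) * η)
        {x : ℂ | ∀ n ∈ Finset.Icc 1 ℓ, theta1 τ (2*x - 2*(n : ℂ)*η) ≠ 0})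
      (nhds (K^m * s m * ∏ j ∈ (Finset.Icc 1 ℓ).erase m, en τ η ((m : ℤ) - (j : ℤ))))
    ∧ (K^m * s m * ∏ j ∈ (Finset.Icc 1 ℓ).erase m, en τ η ((m : ℤ) - (j : ℤ))
          = PsiAnsatz τ η ζ μ ℓ s (-((m : ℂ) * η))
        ↔ K^m * s m
          = (-1 : ℂ)^ℓ * K⁻¹^m * theta1 τ (4*(m : ℂ)*η) *
            (∏ j ∈ (Finset.Icc 1 ℓ).erase m,
              en τ η ((m : ℤ) + (j : ℤ)) / en τ η ((m : ℤ) - (j : ℤ))) *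
            ∑ n ∈ Finset.Icc 1 ℓ, Phi τ (-2*((m : ℂ) + (n : ℂ))*η) ζ * s n) := by
  have hc := theta1_continuous hτ
  have hmI : m ∈ Finset.Icc 1 ℓ := Finset.mem_Icc.mpr ⟨hm1, hm2⟩
  have hKm : K ^ m = Complex.exp (μ * ((m:ℂ)*η)) := by
    rw [hK, ← Complex.exp_nat_mul]; congr 1; ring
  have hKminv : K⁻¹ ^ m = Complex.exp (μ * (-((m:ℂ)*η))) := by
    rw [hK, ← Complex.exp_neg, ← Complex.exp_nat_mul]; congr 1; ring
  have hne : ∀ j ∈ (Finset.Icc 1 ℓ).erase m, en τ η ((m:ℤ) - (j:ℤ)) ≠ 0 := by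
    intro j hj
    obtain ⟨hjm, hjI⟩ := Finset.mem_erase.mp hj
    rw [Finset.mem_Icc] at hjI
    have hjm' : (j:ℤ) ≠ (m:ℤ) := by exact_mod_cast hjm
    exact en_ne_zero hη (by omega) (by omega)
  have hPm : (∏ j ∈ (Finset.Icc 1 ℓ).erase m, en τ η ((m:ℤ) - (j:ℤ))) ≠ 0 :=
    Finset.prod_ne_zero_iff.mpr hne
  -- value of G at mη
  have hGval : Gfun τ η ζ μ ℓ s ((m:ℂ)*η)
      = K^m * s m * ∏ j ∈ (Finset.Icc 1 ℓ).erase m, en τ η ((m:ℤ) - (j:ℤ)) := by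
    unfold Gfun
    rw [Finset.sum_eq_single_of_mem m hmI ?_]
    · rw [show ζ + (2*((m:ℂ)*η) - 2*(m:ℂ)*η) = ζ by ring, div_self hζ, one_mul, ← hKm]
      rw [Finset.prod_congr rfl (fun (j : ℕ) (_ : j ∈ (Finset.Icc 1 ℓ).erase m) =>
            show theta1 τ (2*((m:ℂ)*η) - 2*(j:ℂ)*η)
            = en τ η ((m:ℤ) - (j:ℤ)) from by rw [en]; congr 1; push_cast; ring)]
      ring
    · intro n hn hnm
      have hmE : m ∈ (Finset.Icc 1 ℓ).erase n := Finset.mem_erase.mpr ⟨Ne.symm hnm, hmI⟩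
      rw [Finset.prod_eq_zero hmE
        (by rw [show 2*((m:ℂ)*η) - 2*(m:ℂ)*η = 0 by ring]; exact theta1_zero τ)]
      rw [mul_zero, mul_zero]
  constructor
  · -- tendsto
    have hGc : Continuous (Gfun τ η ζ μ ℓ s) := by
      unfold Gfun
      refine (Complex.continuous_exp.comp (continuous_const.mul continuous_id)).mul ?_
      refine continuous_finset_sum _ fun n _ => Continuous.mul continuous_const ?_
      refine Continuous.mul ((hc.comp (by fun_prop)).div_const _) ?_
      exact continuous_finset_prod _ fun j _ => hc.comp (by fun_prop)
    have h1 : Filter.Tendsto (Gfun τ η ζ μ ℓ s)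
        (nhdsWithin ((m:ℂ)*η)
          {x : ℂ | ∀ n ∈ Finset.Icc 1 ℓ, theta1 τ (2*x - 2*(n : ℂ)*η) ≠ 0})
        (nhds (K^m * s m * ∏ j ∈ (Finset.Icc 1 ℓ).erase m, en τ η ((m:ℤ) - (j:ℤ)))) := by
      rw [← hGval]
      exact (hGc.continuousAt.continuousWithinAt).tendsto
    refine h1.congr' ?_
    filter_upwards [self_mem_nhdsWithin] with x hx
    exact (PsiAnsatz_eq_G hζ hx).symm
  · -- gluing condition
    have hPsiNeg : PsiAnsatz τ η ζ μ ℓ s (-((m:ℂ)*η)) =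
        (-1:ℂ)^ℓ * K⁻¹^m * theta1 τ (4*(m:ℂ)*η) *
          (∏ j ∈ (Finset.Icc 1 ℓ).erase m, en τ η ((m:ℤ)+(j:ℤ))) *
          ∑ n ∈ Finset.Icc 1 ℓ, Phi τ (-2*((m:ℂ)+(n:ℂ))*η) ζ * s n := by
      unfold PsiAnsatz
      have h1 : ∀ j ∈ Finset.Icc 1 ℓ,
          theta1 τ (2*(-((m:ℂ)*η)) - 2*(j:ℂ)*η) = -en τ η ((m:ℤ)+(j:ℤ)) := by
        intro j _
        rw [en, show 2*(-((m:ℂ)*η)) - 2*(j:ℂ)*η = -(2*(((m:ℤ)+(j:ℤ) : ℤ):ℂ)*η) by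
          push_cast; ring, theta1_neg]
      have hprod : (∏ j ∈ Finset.Icc 1 ℓ, theta1 τ (2*(-((m:ℂ)*η)) - 2*(j:ℂ)*η))
          = (-1:ℂ)^ℓ * (theta1 τ (4*(m:ℂ)*η) *
              ∏ j ∈ (Finset.Icc 1 ℓ).erase m, en τ η ((m:ℤ)+(j:ℤ))) := by
        rw [Finset.prod_congr rfl h1,
          Finset.prod_congr rfl (fun (j : ℕ) (_ : j ∈ Finset.Icc 1 ℓ) =>
            (neg_one_mul (en τ η ((m:ℤ)+(j:ℤ)))).symm),
          Finset.prod_mul_distrib, Finset.prod_const, Nat.card_Icc, Nat.add_sub_cancel]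
        rw [← Finset.mul_prod_erase _ _ hmI]
        congr 2
        rw [en]; congr 1; push_cast; ring
      have hsum : (∑ n ∈ Finset.Icc 1 ℓ, s n * Phi τ (2*(-((m:ℂ)*η)) - 2*(n:ℂ)*η) ζ)
          = ∑ n ∈ Finset.Icc 1 ℓ, Phi τ (-2*((m:ℂ)+(n:ℂ))*η) ζ * s n := by
        refine Finset.sum_congr rfl fun n _ => ?_
        rw [show 2*(-((m:ℂ)*η)) - 2*(n:ℂ)*η = -2*((m:ℂ)+(n:ℂ))*η by ring, mul_comm]
      rw [hprod, hsum, ← hKminv]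
      ring
    rw [hPsiNeg, Finset.prod_div_distrib]
    rw [show (-1:ℂ)^ℓ * K⁻¹^m * theta1 τ (4*(m:ℂ)*η) *
        ((∏ j ∈ (Finset.Icc 1 ℓ).erase m, en τ η ((m:ℤ)+(j:ℤ))) /
          (∏ j ∈ (Finset.Icc 1 ℓ).erase m, en τ η ((m:ℤ)-(j:ℤ)))) *
        (∑ n ∈ Finset.Icc 1 ℓ, Phi τ (-2*((m:ℂ)+(n:ℂ))*η) ζ * s n)
      = ((-1:ℂ)^ℓ * K⁻¹^m * theta1 τ (4*(m:ℂ)*η) *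
          (∏ j ∈ (Finset.Icc 1 ℓ).erase m, en τ η ((m:ℤ)+(j:ℤ))) *
          (∑ n ∈ Finset.Icc 1 ℓ, Phi τ (-2*((m:ℂ)+(n:ℂ))*η) ζ * s n)) /
        (∏ j ∈ (Finset.Icc 1 ℓ).erase m, en τ η ((m:ℤ)-(j:ℤ))) from by ring]
    rw [eq_div_iff hPm]
end

section
/- Let ℓ be a nonnegative integer, η ∈ ℂ, and let c_−, c_+, a_1, a_3, …, a_{2ℓ+1} : ℂ → ℂ be functions with a_{2ℓ+1}(x) ≠ 0 for all x. Define scalar difference operators (Lf)(x) = c_−(x) f(x+η) + c_+(x) f(x−η) and (Af)(x) = Σ_{k=0}^{ℓ} a_{2k+1}(x) f(x+(2k+1)η). For z ≠ 0 define the (2ℓ+1)×(2ℓ+1) matrix A(x,z) whose first row has entries z^{−1} a_{2k+1}(x) in columns 2k+1 (k = 0,…,ℓ) and zeros elsewhere, and whose row i (2 ≤ i ≤ 2ℓ+1) has a single 1 in column i−1; set C_±(x) = diag(c_±(x+η), c_±(x+2η), …, c_±(x+(2ℓ+1)η)) and L(x,z) = C_+(x)·A(x,z) + C_−(x)·A(x+η,z)^{−1}.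 Then L∘A = A∘L holds as an identity of operators on all functions ℂ → ℂ if and only if for every z ≠ 0 and every x ∈ ℂ one has L(x−η,z)·A(x,z) = A(x,z)·L(x,z). -/
open Complex Finset

/-- The (2ℓ+1)×(2ℓ+1) matrix A(x,z) associated with the difference operator A:
first row has entries z⁻¹ a_{2k+1}(x) in columns 2k+1 (1-based) and zeros elsewhere;
row i (2 ≤ i ≤ 2ℓ+1) has a single 1 in column i−1. Here `a k` denotes a_{2k+1}. -/
noncomputable def AmatGen (ℓ : ℕ) (a : ℕ → ℂ → ℂ) (x z : ℂ) :
    Matrix (Fin (2*ℓ + 1)) (Fin (2*ℓ + 1)) ℂ :=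
  Matrix.of fun i j =>
    if (i : ℕ) = 0 then (if Even (j : ℕ) then z⁻¹ * a ((j : ℕ) / 2) x else 0)
    else (if (j : ℕ) + 1 = (i : ℕ) then 1 else 0)

/-- L(x,z) = C₊(x)·A(x,z) + C₋(x)·A(x+η,z)⁻¹, with C_±(x) = diag(c_±(x+iη), i=1..2ℓ+1). -/
noncomputable def LmatGen (ℓ : ℕ) (η : ℂ) (cm cp : ℂ → ℂ) (a : ℕ → ℂ → ℂ) (x z : ℂ) :
    Matrix (Fin (2*ℓ + 1)) (Fin (2*ℓ + 1)) ℂ :=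
  Matrix.diagonal (fun i : Fin (2*ℓ + 1) => cp (x + (((i : ℕ) : ℂ) + 1)*η)) * AmatGen ℓ a x z
    + Matrix.diagonal (fun i : Fin (2*ℓ + 1) => cm (x + (((i : ℕ) : ℂ) + 1)*η)) * (AmatGen ℓ a (x + η) z)⁻¹

section
variable (ℓ : ℕ) (a : ℕ → ℂ → ℂ) (x z : ℂ)


noncomputable def Anat (a : ℕ → ℂ → ℂ) (x z : ℂ) (i k : ℕ) : ℂ :=
  if i = 0 then (if Even k then z⁻¹ * a (k / 2) x else 0)
  else if k + 1 = i then 1 else 0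

noncomputable def Bnat (ℓ : ℕ) (a : ℕ → ℂ → ℂ) (x z : ℂ) (k j : ℕ) : ℂ :=
  if k = 2*ℓ then
    (if j = 0 then z / a ℓ x else if Even j then 0 else -(a ((j-1)/2) x) / a ℓ x)
  else if j = k + 1 then 1 else 0

noncomputable def Bmat (ℓ : ℕ) (a : ℕ → ℂ → ℂ) (x z : ℂ) :
    Matrix (Fin (2*ℓ + 1)) (Fin (2*ℓ + 1)) ℂ :=
  Matrix.of fun i j => Bnat ℓ a x z ↑i ↑j

lemma AmatGen_apply (ℓ : ℕ) (a : ℕ → ℂ → ℂ) (x z : ℂ) (i j : Fin (2*ℓ+1)) :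
    AmatGen ℓ a x z i j = Anat a x z ↑i ↑j := rfl

lemma Bmat_apply (ℓ : ℕ) (a : ℕ → ℂ → ℂ) (x z : ℂ) (i j : Fin (2*ℓ+1)) :
    Bmat ℓ a x z i j = Bnat ℓ a x z ↑i ↑j := rfl

/-- split a sum over range (2n+1) into even and odd parts -/
lemma sum_range_split (n : ℕ) (f : ℕ → ℂ) :
    ∑ k ∈ range (2*n+1), f k
      = (∑ m ∈ range (n+1), f (2*m)) + ∑ m ∈ range n, f (2*m+1) := by
  induction n with
  | zero => simp
  | succ n ih =>
      have h : 2*(n+1)+1 = (2*n+1) + 1 + 1 := by ring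
      rw [h, Finset.sum_range_succ, Finset.sum_range_succ, ih,
        Finset.sum_range_succ (n := n+1), Finset.sum_range_succ (n := n)]
      have h1 : 2*n+1 = 2*n+1 := rfl
      have h2 : 2*n+1+1 = 2*(n+1) := by ring
      rw [Finset.sum_range_succ (f := fun m => f (2*m+1)) n, h2]
      ring

/-- collapse: ∑_{k<N} (if k+1 = i then 1 else 0) * F k = F (i-1) for 1 ≤ i ≤ N -/
lemma sum_collapse_pred {N i : ℕ} (hi1 : 1 ≤ i) (hiN : i ≤ N) (F : ℕ → ℂ) :
    ∑ k ∈ range N, (if k + 1 = i then (1:ℂ) else 0) * F k = F (i-1) := by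
  rw [Finset.sum_eq_single (i-1)]
  · have h : i - 1 + 1 = i := by omega
    simp [h]
  · intro k _ hk
    have : k + 1 ≠ i := by omega
    simp [this]
  · intro h
    exfalso; exact h (Finset.mem_range.2 (by omega))

/-- row0 sum: ∑_k Anat 0 k * F k -/
lemma row0_sum (ℓ : ℕ) (a : ℕ → ℂ → ℂ) (x z : ℂ) (F : ℕ → ℂ) :
    ∑ k ∈ range (2*ℓ+1), Anat a x z 0 k * F k
      = z⁻¹ * ∑ m ∈ range (ℓ+1), a m x * F (2*m) := by
  rw [sum_range_split]
  have hodd : ∀ m ∈ range ℓ, Anat a x z 0 (2*m+1) * F (2*m+1) = 0 := by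
    intro m _
    simp [Anat, Nat.even_add_one, parity_simps]
  rw [Finset.sum_congr rfl hodd]
  simp only [Finset.sum_const_zero, add_zero, Finset.mul_sum]
  refine Finset.sum_congr rfl fun m _ => ?_
  have he : Even (2*m) := even_two_mul m
  have h2 : 2*m/2 = m := by omega
  simp [Anat, he, h2]; ring

/-- A * B = 1 -/
lemma A_mul_B (hz : z ≠ 0) (ha : a ℓ x ≠ 0) :
    AmatGen ℓ a x z * Bmat ℓ a x z = 1 := by
  ext i j
  rw [Matrix.mul_apply]
  rw [show (∑ k : Fin (2*ℓ+1), AmatGen ℓ a x z i k * Bmat ℓ a x z k j)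
      = ∑ k : Fin (2*ℓ+1), (fun t => Anat a x z ↑i t * Bnat ℓ a x z t ↑j) ↑k from
    Finset.sum_congr rfl (fun k _ => by rw [AmatGen_apply, Bmat_apply])]
  rw [Fin.sum_univ_eq_sum_range (fun t => Anat a x z ↑i t * Bnat ℓ a x z t ↑j) (2*ℓ+1)]
  have hone : (1 : Matrix (Fin (2*ℓ+1)) (Fin (2*ℓ+1)) ℂ) i j
      = if (i:ℕ) = (j:ℕ) then 1 else 0 := by
    simp [Matrix.one_apply, Fin.ext_iff]
  rw [hone]
  by_cases hi : (i:ℕ) = 0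
  · -- row 0
    rw [show (∑ k ∈ range (2*ℓ+1), Anat a x z ↑i k * Bnat ℓ a x z k ↑j)
        = ∑ k ∈ range (2*ℓ+1), Anat a x z 0 k * Bnat ℓ a x z k ↑j by rw [hi]]
    rw [row0_sum]
    rw [Finset.sum_range_succ]
    have hlast : Bnat ℓ a x z (2*ℓ) ↑j
        = if (j:ℕ) = 0 then z / a ℓ x else if Even (j:ℕ) then 0 else -(a (((j:ℕ)-1)/2) x) / a ℓ x := by
      simp [Bnat]
    rw [hlast]
    have hmid : ∀ m ∈ range ℓ, a m x * Bnat ℓ a x z (2*m) ↑j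
        = a m x * (if (j:ℕ) = 2*m+1 then 1 else 0) := by
      intro m hm
      have : 2*m ≠ 2*ℓ := by simp at hm; omega
      simp [Bnat, this]
    rw [Finset.sum_congr rfl hmid]
    rcases Nat.even_or_odd (j:ℕ) with hj | hj
    · by_cases hj0 : (j:ℕ) = 0
      · have hz' : ∀ m ∈ range ℓ, a m x * (if (j:ℕ) = 2*m+1 then (1:ℂ) else 0) = 0 := by
          intro m _; have : (j:ℕ) ≠ 2*m+1 := by omega
          simp [this]
        rw [Finset.sum_congr rfl hz']
        simp [hj0, hi]
        field_simp
      · have hz' : ∀ m ∈ range ℓ, a m x * (if (j:ℕ) = 2*m+1 then (1:ℂ) else 0) = 0 := by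
          intro m _
          have : (j:ℕ) ≠ 2*m+1 := by
            intro h; rw [h] at hj; simp [parity_simps] at hj
          simp [this]
        rw [Finset.sum_congr rfl hz']
        have : (i:ℕ) ≠ (j:ℕ) := by omega
        simp [hj0, hj, this]
    · -- j odd
      obtain ⟨m0, hm0⟩ := hj
      have hj0 : (j:ℕ) ≠ 0 := by omega
      have hjne : ¬ Even (j:ℕ) := by simp [hm0, parity_simps]
      have hm0lt : m0 < ℓ := by have := j.isLt; omega
      have hcol : ∑ m ∈ range ℓ, a m x * (if (j:ℕ) = 2*m+1 then (1:ℂ) else 0)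
          = a m0 x := by
        rw [Finset.sum_eq_single m0]
        · simp [hm0]
        · intro k _ hk; have : (j:ℕ) ≠ 2*k+1 := by omega
          simp [this]
        · intro h; exact absurd (Finset.mem_range.2 hm0lt) h
      rw [hcol]
      have hd2 : ((j:ℕ)-1)/2 = m0 := by omega
      have : (i:ℕ) ≠ (j:ℕ) := by omega
      simp [hj0, hjne, hd2, this, hi, hm0]
      right
      field_simp
      ring
  · -- row i ≥ 1
    have hi1 : 1 ≤ (i:ℕ) := by omega
    have hiN : (i:ℕ) ≤ 2*ℓ+1 := le_of_lt i.isLt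
    rw [show (∑ k ∈ range (2*ℓ+1), Anat a x z ↑i k * Bnat ℓ a x z k ↑j)
        = ∑ k ∈ range (2*ℓ+1), (if k + 1 = (i:ℕ) then (1:ℂ) else 0) * Bnat ℓ a x z k ↑j by
      refine Finset.sum_congr rfl fun k _ => by simp [Anat, hi]]
    rw [sum_collapse_pred hi1 hiN]
    have hne : (i:ℕ) - 1 ≠ 2*ℓ := by omega
    simp [Bnat, hne]
    have : ((j:ℕ) = (i:ℕ) - 1 + 1) ↔ ((i:ℕ) = (j:ℕ)) := by omega
    simp [this]
end

section
variable (ℓ : ℕ) (η : ℂ) (cm cp : ℂ → ℂ) (a : ℕ → ℂ → ℂ) (x z : ℂ)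

lemma Ainv_eq (hz : z ≠ 0) (ha : a ℓ x ≠ 0) :
    (AmatGen ℓ a x z)⁻¹ = Bmat ℓ a x z :=
  Matrix.inv_eq_right_inv (A_mul_B ℓ a x z hz ha)

noncomputable def Lnat (k j : ℕ) : ℂ :=
  cp (x + ((k:ℂ)+1)*η) * Anat a x z k j + cm (x + ((k:ℂ)+1)*η) * Bnat ℓ a (x+η) z k j

lemma Lmat_apply (hz : z ≠ 0) (ha : a ℓ (x+η) ≠ 0) (i j : Fin (2*ℓ+1)) :
    LmatGen ℓ η cm cp a x z i j = Lnat ℓ η cm cp a x z ↑i ↑j := by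
  rw [LmatGen, Ainv_eq ℓ a (x+η) z hz ha]
  simp only [Matrix.add_apply, Matrix.diagonal_mul, Lnat, AmatGen_apply, Bmat_apply]

/-- last row of B times A equals the corresponding row of 1 -/
lemma BrowA (hz : z ≠ 0) (ha : a ℓ x ≠ 0) (j : ℕ) (hj : j < 2*ℓ+1) :
    ∑ k ∈ range (2*ℓ+1), Bnat ℓ a x z (2*ℓ) k * Anat a x z k j
      = if j = 2*ℓ then 1 else 0 := by
  rw [Finset.sum_range_succ']
  have h0 : Bnat ℓ a x z (2*ℓ) 0 * Anat a x z 0 j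
      = (z / a ℓ x) * (if Even j then z⁻¹ * a (j/2) x else 0) := by
    simp [Bnat, Anat]
  have hmid : ∀ k ∈ range (2*ℓ), Bnat ℓ a x z (2*ℓ) (k+1) * Anat a x z (k+1) j
      = Bnat ℓ a x z (2*ℓ) (k+1) * (if j = k then 1 else 0) := by
    intro k hk
    have hk1 : k + 1 ≠ 0 := by omega
    have : (j + 1 = k + 1) ↔ (j = k) := by omega
    simp [Anat, hk1, this]
  rw [h0, Finset.sum_congr rfl hmid]
  by_cases hjl : j = 2*ℓ
  · have hz' : ∀ k ∈ range (2*ℓ), Bnat ℓ a x z (2*ℓ) (k+1) * (if j = k then (1:ℂ) else 0) = 0 := by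
      intro k hk
      have : j ≠ k := by simp at hk; omega
      simp [this]
    rw [Finset.sum_congr rfl hz']
    have : Even j := by rw [hjl]; exact even_two_mul ℓ
    have hd : j / 2 = ℓ := by omega
    simp [this, hd, hjl]
    field_simp
  · have hjlt : j < 2*ℓ := by omega
    have hcol : ∑ k ∈ range (2*ℓ), Bnat ℓ a x z (2*ℓ) (k+1) * (if j = k then (1:ℂ) else 0)
        = Bnat ℓ a x z (2*ℓ) (j+1) := by
      rw [Finset.sum_eq_single j] <;> simp_all
      intro k _ hk; simp [Ne.symm hk]
    rw [hcol]
    rcases Nat.even_or_odd j with hj2 | hj2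
    · have h1 : j + 1 ≠ 2*ℓ := by
        intro h; obtain ⟨t, ht⟩ := hj2; omega
      have h2 : ¬ Even (j+1) := by simp [parity_simps, hj2]
      have h3 : (j+1) ≠ 0 := by omega
      have hd : (j+1-1)/2 = j/2 := by omega
      simp [Bnat, h1, h2, h3, hd, hj2, hjl]
      field_simp
      ring
    · have h2 : Even (j+1) := by simp [parity_simps, hj2]
      have h1 : j + 1 ≠ 2*ℓ ∨ j + 1 = 2*ℓ := by omega
      have hodd : ¬ Even j := by simp [parity_simps, hj2]
      rcases h1 with h1 | h1
      · simp [Bnat, h1, h2, hodd, hjl]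
      · simp [Bnat, h1, h2, hodd, hjl]
        omega

noncomputable def cLHS (j : ℕ) : ℂ :=
  cp x * (if Even j then z⁻¹ * (a 0 (x-η) * (z⁻¹ * a (j/2) x)) else z⁻¹ * a ((j+1)/2) (x-η))
  + (if j = 0 then cm x else 0)

noncomputable def cRHS (j : ℕ) : ℂ :=
  if Even j then
    z⁻¹ * (a 0 x * cp (x+η) * (z⁻¹ * a (j/2) x))
      + (if j = 0 then a ℓ x * cm (x+(2*(ℓ:ℂ)+1)*η) / a ℓ (x+η) else 0)
  else
    z⁻¹ * (a ((j+1)/2) x * cp (x + ((j:ℂ)+2)*η) + a ((j-1)/2) x * cm (x + (j:ℂ)*η)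
      - a ℓ x * cm (x+(2*(ℓ:ℂ)+1)*η) * a ((j-1)/2) (x+η) / a ℓ (x+η))

noncomputable def cRow (i j : ℕ) : ℂ :=
  cp (x + (i:ℂ)*η) * Anat a x z (i-1) j + cm (x + (i:ℂ)*η) * (if j = i then 1 else 0)

lemma evalLHS (hz : z ≠ 0) (ha : ∀ y, a ℓ y ≠ 0) (i j : ℕ) (hi : i < 2*ℓ+1) (hj : j < 2*ℓ+1) :
    ∑ k ∈ range (2*ℓ+1), Lnat ℓ η cm cp a (x-η) z i k * Anat a x z k j
      = if i = 0 then cLHS η cm cp a x z j else cRow η cm cp a x z i j := by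
  have hxx : x - η + η = x := by ring
  by_cases hi0 : i = 0
  · subst hi0
    simp only [if_pos]
    have hsplit : ∀ k, Lnat ℓ η cm cp a (x-η) z 0 k * Anat a x z k j
        = cp x * (Anat a (x-η) z 0 k * Anat a x z k j)
          + cm x * (Bnat ℓ a x z 0 k * Anat a x z k j) := by
      intro k
      have harg : x - η + (((0:ℕ):ℂ)+1)*η = x := by push_cast; ring
      simp only [Lnat, hxx, harg]
      ring
    rw [Finset.sum_congr rfl (fun k _ => hsplit k), Finset.sum_add_distrib,
      ← Finset.mul_sum, ← Finset.mul_sum]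
    rcases Nat.eq_zero_or_pos ℓ with hl0 | hl1
    · -- ℓ = 0 : single index
      subst hl0
      have hj0 : j = 0 := by omega
      subst hj0
      simp [Anat, Bnat, cLHS]
      have h0 : a 0 x ≠ 0 := ha x
      field_simp
      try ring
    · -- ℓ ≥ 1
      have hB : ∀ k, Bnat ℓ a x z 0 k = if k = 1 then 1 else 0 := by
        intro k
        have : (0:ℕ) ≠ 2*ℓ := by omega
        simp [Bnat, this]
      have hsum2 : ∑ k ∈ range (2*ℓ+1), Bnat ℓ a x z 0 k * Anat a x z k j
          = if j = 0 then 1 else 0 := by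
        rw [Finset.sum_eq_single 1]
        · have h1 : (1:ℕ) ≠ 0 := one_ne_zero
          have : (j + 1 = 1) ↔ (j = 0) := by omega
          simp [hB, Anat, h1, this]
        · intro k _ hk; simp [hB, hk]
        · intro h; exfalso; exact h (Finset.mem_range.2 (by omega))
      have hsum1 : ∑ k ∈ range (2*ℓ+1), Anat a (x-η) z 0 k * Anat a x z k j
          = if Even j then z⁻¹ * (a 0 (x-η) * (z⁻¹ * a (j/2) x)) else z⁻¹ * a ((j+1)/2) (x-η) := by
        rw [row0_sum, Finset.sum_range_succ']
        have h0 : a 0 (x-η) * Anat a x z (2*0) j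
            = a 0 (x-η) * (if Even j then z⁻¹ * a (j/2) x else 0) := by
          norm_num [Anat]
        have hmid : ∀ m ∈ range ℓ, a (m+1) (x-η) * Anat a x z (2*(m+1)) j
            = a (m+1) (x-η) * (if j + 1 = 2*m+2 then 1 else 0) := by
          intro m _
          have h1 : 2*(m+1) ≠ 0 := by omega
          have h2 : 2*(m+1) = 2*m+2 := by ring
          simp [Anat, h1, h2]
        rw [h0, Finset.sum_congr rfl hmid]
        rcases Nat.even_or_odd j with hj2 | hj2
        · have hzero : ∀ m ∈ range ℓ, a (m+1) (x-η) * (if j + 1 = 2*m+2 then (1:ℂ) else 0) = 0 := by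
            intro m _
            have : j + 1 ≠ 2*m+2 := by obtain ⟨t, ht⟩ := hj2; omega
            rw [if_neg this, mul_zero]
          rw [Finset.sum_congr rfl hzero]
          simp [hj2]
          try ring
        · obtain ⟨m0, hm0⟩ := hj2
          have hjo : ¬ Even j := by simp [hm0, parity_simps]
          have hm0lt : m0 < ℓ := by omega
          have hcol : ∑ m ∈ range ℓ, a (m+1) (x-η) * (if j + 1 = 2*m+2 then (1:ℂ) else 0)
              = a (m0+1) (x-η) := by
            rw [Finset.sum_eq_single m0]
            · simp [hm0]
            · intro k _ hk
              have : j + 1 ≠ 2*k+2 := by omega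
              rw [if_neg this, mul_zero]
            · intro h; exact absurd (Finset.mem_range.2 hm0lt) h
          rw [hcol]
          have hd : (j+1)/2 = m0 + 1 := by omega
          simp [hjo, hd]
          try ring
      rw [hsum1, hsum2, cLHS]
      simp [mul_ite]
  · -- i ≥ 1
    have hi1 : 1 ≤ i := by omega
    simp only [if_neg hi0]
    have hsplit : ∀ k, Lnat ℓ η cm cp a (x-η) z i k * Anat a x z k j
        = cp (x + (i:ℂ)*η) * (Anat a (x-η) z i k * Anat a x z k j)
          + cm (x + (i:ℂ)*η) * (Bnat ℓ a x z i k * Anat a x z k j) := by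
      intro k
      have harg : x - η + ((i:ℂ)+1)*η = x + (i:ℂ)*η := by ring
      simp only [Lnat, hxx, harg]
      ring
    rw [Finset.sum_congr rfl (fun k _ => hsplit k), Finset.sum_add_distrib,
      ← Finset.mul_sum, ← Finset.mul_sum]
    have hsum1 : ∑ k ∈ range (2*ℓ+1), Anat a (x-η) z i k * Anat a x z k j
        = Anat a x z (i-1) j := by
      have : ∀ k, Anat a (x-η) z i k = if k + 1 = i then 1 else 0 := by
        intro k; simp [Anat, hi0]
      rw [Finset.sum_congr rfl (fun k _ => by rw [this k])]
      exact sum_collapse_pred hi1 (by omega) _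
    have hsum2 : ∑ k ∈ range (2*ℓ+1), Bnat ℓ a x z i k * Anat a x z k j
        = if j = i then 1 else 0 := by
      by_cases hil : i = 2*ℓ
      · subst hil
        rw [BrowA ℓ a x z hz (ha x) j hj]
      · have hBi : ∀ k, Bnat ℓ a x z i k = if k = i + 1 then 1 else 0 := by
          intro k; simp [Bnat, hil]
        rw [Finset.sum_congr rfl (fun k _ => by rw [hBi k])]
        rw [Finset.sum_eq_single (i+1)]
        · have h1 : i + 1 ≠ 0 := by omega
          have h2 : (j + 1 = i + 1) ↔ (j = i) := by omega
          simp [Anat, h1, h2]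
        · intro k _ hk; simp [hk]
        · intro h; exfalso; exact h (Finset.mem_range.2 (by omega))
    rw [hsum1, hsum2, cRow]

lemma evalRHS (hz : z ≠ 0) (ha : ∀ y, a ℓ y ≠ 0) (i j : ℕ) (hi : i < 2*ℓ+1) (hj : j < 2*ℓ+1) :
    ∑ k ∈ range (2*ℓ+1), Anat a x z i k * Lnat ℓ η cm cp a x z k j
      = if i = 0 then cRHS ℓ η cm cp a x z j else cRow η cm cp a x z i j := by
  by_cases hi0 : i = 0
  · subst hi0
    simp only [if_pos]
    rw [show (∑ k ∈ range (2*ℓ+1), Anat a x z 0 k * Lnat ℓ η cm cp a x z k j)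
        = ∑ k ∈ range (2*ℓ+1), Anat a x z 0 k * (fun k => Lnat ℓ η cm cp a x z k j) k from rfl]
    rw [row0_sum]
    rcases Nat.eq_zero_or_pos ℓ with hl0 | hl1
    · -- ℓ = 0
      subst hl0
      have hj0 : j = 0 := by omega
      subst hj0
      have hb : Bnat 0 a (x+η) z 0 0 = z / a 0 (x+η) := by simp [Bnat]
      simp [Lnat, Anat, hb, cRHS]
      have h0 : a 0 (x+η) ≠ 0 := ha (x+η)
      field_simp
    · -- ℓ ≥ 1
      obtain ⟨t, rfl⟩ : ∃ t, ℓ = t + 1 := ⟨ℓ-1, by omega⟩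
      rw [Finset.sum_range_succ, Finset.sum_range_succ']
      have hmid : ∀ m ∈ range t, a (m+1) x * Lnat (t+1) η cm cp a x z (2*(m+1)) j
          = a (m+1) x * cp (x + (2*(m:ℂ)+3)*η) * (if j + 1 = 2*(m+1) then 1 else 0)
            + a (m+1) x * cm (x + (2*(m:ℂ)+3)*η) * (if j = 2*(m+1)+1 then 1 else 0) := by
        intro m hm
        simp only [Finset.mem_range] at hm
        have h1 : 2*(m+1) ≠ 0 := by omega
        have h2 : 2*(m+1) ≠ 2*(t+1) := by omega
        have e1 : x + (((2*(m+1):ℕ):ℂ)+1)*η = x + (2*(m:ℂ)+3)*η := by push_cast; ring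
        simp only [Lnat, Anat, Bnat, if_neg h1, if_neg h2, e1]
        ring
      rw [Finset.sum_congr rfl hmid]
      have h0 : a 0 x * Lnat (t+1) η cm cp a x z (2*0) j
          = a 0 x * cp (x + η) * (if Even j then z⁻¹ * a (j/2) x else 0)
            + a 0 x * cm (x + η) * (if j = 1 then 1 else 0) := by
        have h1 : (0:ℕ) ≠ 2*(t+1) := by omega
        have e1 : x + (((2*0:ℕ):ℂ)+1)*η = x + η := by push_cast; ring
        simp only [Nat.mul_zero, Lnat, Anat, Bnat, if_neg h1, e1]
        norm_num
        split_ifs <;> ring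
      rw [h0]
      have hlast : a (t+1) x * Lnat (t+1) η cm cp a x z (2*(t+1)) j
          = a (t+1) x * cp (x + (2*((t:ℂ)+1)+1)*η) * (if j + 1 = 2*(t+1) then 1 else 0)
            + a (t+1) x * cm (x + (2*((t:ℂ)+1)+1)*η) *
              (if j = 0 then z / a (t+1) (x+η) else if Even j then 0
               else -(a ((j-1)/2) (x+η)) / a (t+1) (x+η)) := by
        have h1 : 2*(t+1) ≠ 0 := by omega
        have e1 : x + (((2*(t+1):ℕ):ℂ)+1)*η = x + (2*((t:ℂ)+1)+1)*η := by push_cast; ring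
        have hb : Bnat (t+1) a (x+η) z (2*(t+1)) j
            = if j = 0 then z / a (t+1) (x+η) else if Even j then 0
              else -(a ((j-1)/2) (x+η)) / a (t+1) (x+η) := by
          simp [Bnat]
        simp only [Lnat, Anat, if_neg h1, e1, hb]
        ring
      rw [hlast]
      rcases Nat.even_or_odd j with hj2 | hj2
      · -- j even
        have hmz : ∀ m ∈ range t,
            (a (m+1) x * cp (x + (2*(m:ℂ)+3)*η) * (if j + 1 = 2*(m+1) then (1:ℂ) else 0)
            + a (m+1) x * cm (x + (2*(m:ℂ)+3)*η) * (if j = 2*(m+1)+1 then 1 else 0)) = 0 := by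
          intro m _
          obtain ⟨s, hs⟩ := hj2
          have c1 : j + 1 ≠ 2*(m+1) := by omega
          have c2 : j ≠ 2*(m+1)+1 := by omega
          simp [c1, c2]
        rw [Finset.sum_congr rfl hmz, Finset.sum_const_zero]
        have c1 : j + 1 ≠ 2*(t+1) := by obtain ⟨s, hs⟩ := hj2; omega
        rw [cRHS, if_pos hj2]
        by_cases hj0 : j = 0
        · subst hj0
          simp [c1]
          have h1 : a (t+1) (x+η) ≠ 0 := ha (x+η)
          field_simp
        · have c2 : j ≠ 1 := by obtain ⟨s, hs⟩ := hj2; omega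
          simp [c1, hj0, hj2, c2]
          try ring
      · -- j odd
        obtain ⟨m0, hm0⟩ := hj2
        have hjodd : ¬ Even j := by simp [hm0, parity_simps]
        have hj0 : j ≠ 0 := by omega
        have hm0le : m0 ≤ t := by omega
        have hd1 : (j+1)/2 = m0 + 1 := by omega
        have hd2 : (j-1)/2 = m0 := by omega
        rw [Finset.sum_add_distrib]
        have hcp : ∑ m ∈ range t,
            a (m+1) x * cp (x + (2*(m:ℂ)+3)*η) * (if j + 1 = 2*(m+1) then (1:ℂ) else 0)
            = if m0 < t then a (m0+1) x * cp (x + (2*(m0:ℂ)+3)*η) else 0 := by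
          by_cases hmt : m0 < t
          · rw [if_pos hmt, Finset.sum_eq_single m0]
            · have e : j + 1 = 2*(m0+1) := by omega
              simp [e]
            · intro k _ hk
              have : j + 1 ≠ 2*(k+1) := by omega
              simp [this]
            · intro h; exact absurd (Finset.mem_range.2 hmt) h
          · rw [if_neg hmt]
            refine Finset.sum_eq_zero fun k hk => ?_
            simp only [Finset.mem_range] at hk
            have : j + 1 ≠ 2*(k+1) := by omega
            simp [this]
        have hcm : ∑ m ∈ range t,
            a (m+1) x * cm (x + (2*(m:ℂ)+3)*η) * (if j = 2*(m+1)+1 then (1:ℂ) else 0)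
            = if 1 ≤ m0 then a m0 x * cm (x + (2*(m0:ℂ)+1)*η) else 0 := by
          by_cases hm1 : 1 ≤ m0
          · rw [if_pos hm1, Finset.sum_eq_single (m0-1)]
            · have hc : j = 2*(m0-1+1)+1 := by omega
              have e : (((m0-1:ℕ)):ℂ) = (m0:ℂ) - 1 := by
                push_cast [Nat.cast_sub hm1]; ring
              rw [if_pos hc]
              have e2 : x + (2*(((m0-1:ℕ)):ℂ)+3)*η = x + (2*(m0:ℂ)+1)*η := by
                rw [e]; ring
              have e3 : m0 - 1 + 1 = m0 := by omega
              rw [e2, e3, mul_one]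
            · intro k _ hk
              have : j ≠ 2*(k+1)+1 := by omega
              simp [this]
            · intro h
              have : m0 - 1 < t := by omega
              exact absurd (Finset.mem_range.2 this) h
          · rw [if_neg hm1]
            refine Finset.sum_eq_zero fun k hk => ?_
            have : j ≠ 2*(k+1)+1 := by omega
            simp [this]
        rw [hcp, hcm, cRHS]
        simp only [if_neg hjodd, if_neg hj0]
        have hcpeq : (if j = 1 then (1:ℂ) else 0) = (if 1 ≤ m0 then 0 else 1) := by
          by_cases h1 : 1 ≤ m0
          · have : j ≠ 1 := by omega
            simp [this, h1]
          · have : j = 1 := by omega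
            simp [this, h1]
        have hcl : (if j + 1 = 2*(t+1) then (1:ℂ) else 0) = (if m0 < t then 0 else 1) := by
          by_cases hmt : m0 < t
          · have : j + 1 ≠ 2*(t+1) := by omega
            simp [this, hmt]
          · have : j + 1 = 2*(t+1) := by omega
            simp [this, hmt]
        rw [hcpeq, hcl, hd1, hd2]
        have hja : (j:ℂ) = 2*(m0:ℂ)+1 := by rw [hm0]; push_cast; ring
        rw [hja]
        push_cast
        have e4 : x + (2*(m0:ℂ)+1+2)*η = x + (2*(m0:ℂ)+3)*η := by ring
        rw [e4]
        by_cases hmt : m0 < t <;> by_cases hm1 : 1 ≤ m0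
        · simp only [if_pos hmt, if_pos hm1]
          ring_nf
        · simp only [if_pos hmt, if_neg hm1]
          have hm00 : m0 = 0 := by omega
          subst hm00
          push_cast
          ring_nf
        · simp only [if_neg hmt, if_pos hm1]
          have hm0t : m0 = t := by omega
          subst hm0t
          ring_nf
        · simp only [if_neg hmt, if_neg hm1]
          have hm00 : m0 = 0 := by omega
          have ht0 : t = 0 := by omega
          subst hm00; subst ht0
          push_cast
          ring_nf
  · -- i ≥ 1
    have hi1 : 1 ≤ i := by omega
    have hA : ∀ k, Anat a x z i k = if k + 1 = i then 1 else 0 := by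
      intro k; simp [Anat, hi0]
    rw [Finset.sum_congr rfl (fun k _ => by rw [hA k])]
    rw [sum_collapse_pred hi1 (by omega)]
    rw [if_neg hi0, cRow, Lnat]
    have e1 : x + (((i-1:ℕ):ℂ)+1)*η = x + (i:ℂ)*η := by
      have : ((i-1:ℕ):ℂ) = (i:ℂ) - 1 := by push_cast [Nat.cast_sub hi1]; ring
      rw [this]; ring
    rw [e1]
    have hb : Bnat ℓ a (x+η) z (i-1) j = if j = i then 1 else 0 := by
      have h2 : i - 1 ≠ 2*ℓ := by omega
      have h3 : (j = i - 1 + 1) ↔ (j = i) := by omega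
      simp [Bnat, h2, h3]
    rw [hb]

lemma prodL_entry (hz : z ≠ 0) (ha : ∀ y, a ℓ y ≠ 0) (i j : Fin (2*ℓ+1)) :
    (LmatGen ℓ η cm cp a (x-η) z * AmatGen ℓ a x z) i j
      = ∑ k ∈ range (2*ℓ+1), Lnat ℓ η cm cp a (x-η) z ↑i k * Anat a x z k ↑j := by
  rw [Matrix.mul_apply]
  rw [show (∑ k : Fin (2*ℓ+1), LmatGen ℓ η cm cp a (x-η) z i k * AmatGen ℓ a x z k j)
      = ∑ k : Fin (2*ℓ+1), (fun t => Lnat ℓ η cm cp a (x-η) z ↑i t * Anat a x z t ↑j) ↑k from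
    Finset.sum_congr rfl fun k _ => by
      rw [Lmat_apply ℓ η cm cp a (x-η) z hz (ha _), AmatGen_apply]]
  rw [Fin.sum_univ_eq_sum_range (fun t => Lnat ℓ η cm cp a (x-η) z ↑i t * Anat a x z t ↑j) (2*ℓ+1)]

lemma prodR_entry (hz : z ≠ 0) (ha : ∀ y, a ℓ y ≠ 0) (i j : Fin (2*ℓ+1)) :
    (AmatGen ℓ a x z * LmatGen ℓ η cm cp a x z) i j
      = ∑ k ∈ range (2*ℓ+1), Anat a x z ↑i k * Lnat ℓ η cm cp a x z k ↑j := by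
  rw [Matrix.mul_apply]
  rw [show (∑ k : Fin (2*ℓ+1), AmatGen ℓ a x z i k * LmatGen ℓ η cm cp a x z k j)
      = ∑ k : Fin (2*ℓ+1), (fun t => Anat a x z ↑i t * Lnat ℓ η cm cp a x z t ↑j) ↑k from
    Finset.sum_congr rfl fun k _ => by
      rw [Lmat_apply ℓ η cm cp a x z hz (ha _), AmatGen_apply]]
  rw [Fin.sum_univ_eq_sum_range (fun t => Anat a x z ↑i t * Lnat ℓ η cm cp a x z t ↑j) (2*ℓ+1)]

lemma lax_iff (hz : z ≠ 0) (ha : ∀ y, a ℓ y ≠ 0) :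
    (LmatGen ℓ η cm cp a (x-η) z * AmatGen ℓ a x z
        = AmatGen ℓ a x z * LmatGen ℓ η cm cp a x z)
    ↔ (∀ j < 2*ℓ+1, cLHS η cm cp a x z j = cRHS ℓ η cm cp a x z j) := by
  constructor
  · intro H j hj
    have h1 := congrFun (congrFun H ⟨0, by omega⟩) ⟨j, hj⟩
    rw [prodL_entry ℓ η cm cp a x z hz ha, prodR_entry ℓ η cm cp a x z hz ha] at h1
    rw [evalLHS ℓ η cm cp a x z hz ha _ _ (by simp) (by simpa using hj),
      evalRHS ℓ η cm cp a x z hz ha _ _ (by simp) (by simpa using hj)] at h1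
    simpa using h1
  · intro H
    ext i j
    rw [prodL_entry ℓ η cm cp a x z hz ha, prodR_entry ℓ η cm cp a x z hz ha,
      evalLHS ℓ η cm cp a x z hz ha _ _ i.isLt j.isLt,
      evalRHS ℓ η cm cp a x z hz ha _ _ i.isLt j.isLt]
    by_cases hi0 : (i:ℕ) = 0
    · rw [if_pos hi0, if_pos hi0]
      exact H _ j.isLt
    · rw [if_neg hi0, if_neg hi0]

def EidP (ℓ : ℕ) (η : ℂ) (cm cp : ℂ → ℂ) (a : ℕ → ℂ → ℂ) : Prop :=
  ∀ m, m ≤ ℓ+1 → ∀ x : ℂ,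
    (if 1 ≤ m then cm x * a (m-1) (x+η) else 0) + (if m ≤ ℓ then cp x * a m (x-η) else 0)
    = (if 1 ≤ m then a (m-1) x * cm (x + (2*(m:ℂ)-1)*η) else 0)
      + (if m ≤ ℓ then a m x * cp (x + (2*(m:ℂ)+1)*η) else 0)

lemma E0_of (hE : EidP ℓ η cm cp a) (x : ℂ) :
    cp x * a 0 (x-η) = a 0 x * cp (x+η) := by
  have h := hE 0 (by omega) x
  norm_num at h
  exact h

lemma El_of (hE : EidP ℓ η cm cp a) (x : ℂ) :
    cm x * a ℓ (x+η) = a ℓ x * cm (x + (2*(ℓ:ℂ)+1)*η) := by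
  have h := hE (ℓ+1) (by omega) x
  have h1 : ¬ (ℓ + 1 ≤ ℓ) := by omega
  simp only [if_neg h1, if_pos (by omega : 1 ≤ ℓ+1), Nat.add_sub_cancel, add_zero] at h
  rw [show x + (2*((ℓ+1:ℕ):ℂ)-1)*η = x + (2*(ℓ:ℂ)+1)*η by push_cast; ring] at h
  exact h

lemma Em_of (hE : EidP ℓ η cm cp a) (m : ℕ) (hm : m + 1 ≤ ℓ) (x : ℂ) :
    cm x * a m (x+η) + cp x * a (m+1) (x-η)
      = a m x * cm (x + (2*(m:ℂ)+1)*η) + a (m+1) x * cp (x + (2*(m:ℂ)+3)*η) := by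
  have h := hE (m+1) (by omega) x
  simp only [if_pos (by omega : 1 ≤ m+1), if_pos hm, Nat.add_sub_cancel] at h
  rw [show x + (2*((m+1:ℕ):ℂ)-1)*η = x + (2*(m:ℂ)+1)*η by push_cast; ring,
    show x + (2*((m+1:ℕ):ℂ)+1)*η = x + (2*(m:ℂ)+3)*η by push_cast; ring] at h
  exact h

lemma E_to_row (hE : EidP ℓ η cm cp a) (hz : z ≠ 0) (ha : ∀ y, a ℓ y ≠ 0)
    (j : ℕ) (hj : j < 2*ℓ+1) :
    cLHS η cm cp a x z j = cRHS ℓ η cm cp a x z j := by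
  have e0 := E0_of ℓ η cm cp a hE x
  have el := El_of ℓ η cm cp a hE x
  have hal : a ℓ (x+η) ≠ 0 := ha (x+η)
  have el' : cm x * a ℓ (x+η) = a ℓ x * cm (x + η*(2*(ℓ:ℂ)+1)) := by
    rw [show x + η*(2*(ℓ:ℂ)+1) = x + (2*(ℓ:ℂ)+1)*η by ring]; exact el
  rcases Nat.even_or_odd j with hj2 | hj2
  · rw [cLHS, cRHS, if_pos hj2, if_pos hj2]
    by_cases hj0 : j = 0
    · rw [if_pos hj0, if_pos hj0]
      field_simp
      linear_combination (a (j/2) x * a ℓ (x+η)) * e0 + z^2 * el'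
    · rw [if_neg hj0, if_neg hj0]
      simp only [add_zero]
      linear_combination (z⁻¹ * z⁻¹ * a (j/2) x) * e0
  · obtain ⟨m0, hm0⟩ := hj2
    have hjodd : ¬ Even j := by simp [hm0, parity_simps]
    have hm1 : m0 + 1 ≤ ℓ := by omega
    have em := Em_of ℓ η cm cp a hE m0 hm1 x
    have em' : cm x * a m0 (x+η) + cp x * a (m0+1) (x-η)
        = a m0 x * cm (x + η*(2*(m0:ℂ)+1)) + a (m0+1) x * cp (x + η*(2*(m0:ℂ)+3)) := by
      rw [show x + η*(2*(m0:ℂ)+1) = x + (2*(m0:ℂ)+1)*η by ring,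
        show x + η*(2*(m0:ℂ)+3) = x + (2*(m0:ℂ)+3)*η by ring]; exact em
    rw [cLHS, cRHS, if_neg hjodd, if_neg hjodd, if_neg (by omega : ¬ j = 0)]
    have hd1 : (j+1)/2 = m0+1 := by omega
    have hd2 : (j-1)/2 = m0 := by omega
    have hja : (j:ℂ) = 2*(m0:ℂ)+1 := by rw [hm0]; push_cast; ring
    rw [hd1, hd2, hja, add_zero]
    rw [show x + (2*(m0:ℂ)+1+2)*η = x + (2*(m0:ℂ)+3)*η by ring,
      show x + (2*(m0:ℂ)+1)*η = x + (2*(m0:ℂ)+1)*η from rfl]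
    field_simp
    linear_combination (a ℓ (x+η)) * em' - (a m0 (x+η)) * el'

lemma row_to_E (ha : ∀ y, a ℓ y ≠ 0)
    (H : ∀ z : ℂ, z ≠ 0 → ∀ x : ℂ, ∀ j < 2*ℓ+1,
      cLHS η cm cp a x z j = cRHS ℓ η cm cp a x z j) :
    EidP ℓ η cm cp a := by
  -- first extract E_{ℓ+1} and E_0 at every x
  have key : ∀ x : ℂ,
      (cm x * a ℓ (x+η) = a ℓ x * cm (x + (2*(ℓ:ℂ)+1)*η))
      ∧ (cp x * a 0 (x-η) = a 0 x * cp (x+η)) := by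
    intro x
    have hal : a ℓ (x+η) ≠ 0 := ha (x+η)
    have h1 := H 1 one_ne_zero x 0 (by omega)
    have h2 := H 2 two_ne_zero x 0 (by omega)
    rw [cLHS, cRHS] at h1 h2
    norm_num at h1 h2
    -- h1 : cp x * (a 0 (x-η) * a 0 x) + cm x = a 0 x * cp (x+η) * a 0 x + a ℓ x * cm (...) / a ℓ (x+η)
    -- separate powers of z using h1, h2
    field_simp at h1 h2
    have hel : cm x * a ℓ (x+η) = a ℓ x * cm (x + (2*(ℓ:ℂ)+1)*η) := by
      rw [show x + (2*(ℓ:ℂ)+1)*η = x + η*(2*(ℓ:ℂ)+1) by ring]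
      linear_combination (-1/3 : ℂ) * h1 + (1/3 : ℂ) * h2
    refine ⟨hel, ?_⟩
    rcases Nat.eq_zero_or_pos ℓ with hl0 | hl1
    · -- ℓ = 0 : cancel a 0 x which equals a ℓ x ≠ 0
      have h0 : a 0 x ≠ 0 := by
        have := ha x; rw [hl0] at this; exact this
      have hPQ : (cp x * a 0 (x-η) - a 0 x * cp (x+η)) * (a 0 x * a ℓ (x+η)) = 0 := by
        linear_combination (4/3 : ℂ) * h1 - (1/3 : ℂ) * h2
      rcases mul_eq_zero.mp hPQ with h | h
      · exact sub_eq_zero.mp h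
      · exact absurd h (mul_ne_zero h0 hal)
    · -- ℓ ≥ 1 : use column j = 2ℓ
      have h3 := H 1 one_ne_zero x (2*ℓ) (by omega)
      rw [cLHS, cRHS] at h3
      have he : Even (2*ℓ) := even_two_mul ℓ
      have hne : 2*ℓ ≠ 0 := by omega
      have hd : 2*ℓ/2 = ℓ := by omega
      rw [if_pos he, if_pos he, if_neg hne, if_neg hne, hd] at h3
      norm_num at h3
      have hax : a ℓ x ≠ 0 := ha x
      have : a ℓ x * (cp x * a 0 (x-η)) = a ℓ x * (a 0 x * cp (x+η)) := by
        linear_combination h3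
      exact mul_left_cancel₀ hax this
  intro m hm x
  have hal : a ℓ (x+η) ≠ 0 := ha (x+η)
  rcases Nat.eq_zero_or_pos m with hm0 | hm1
  · subst hm0
    norm_num
    exact (key x).2
  rcases Nat.lt_or_ge m (ℓ+1) with hml | hml
  · -- 1 ≤ m ≤ ℓ : use odd column j = 2m-1
    have hmle : m ≤ ℓ := by omega
    obtain ⟨m0, rfl⟩ : ∃ m0, m = m0 + 1 := ⟨m-1, by omega⟩
    have h3 := H 1 one_ne_zero x (2*m0+1) (by omega)
    rw [cLHS, cRHS] at h3
    have hjodd : ¬ Even (2*m0+1) := by simp [parity_simps]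
    have hne : 2*m0+1 ≠ 0 := by omega
    have hd1 : (2*m0+1+1)/2 = m0+1 := by omega
    have hd2 : (2*m0+1-1)/2 = m0 := by omega
    rw [if_neg hjodd, if_neg hjodd, if_neg hne, hd1, hd2] at h3
    norm_num at h3
    have el := (key x).1
    -- h3 : cp x * a (m0+1) (x-η) = a (m0+1) x * cp (...) + a m0 x * cm (...) - a ℓ x * cm (...) * a m0 (x+η) / a ℓ (x+η)
    have hgoal : cm x * a m0 (x+η) + cp x * a (m0+1) (x-η)
        = a m0 x * cm (x + (2*((m0+1:ℕ):ℂ)-1)*η) + a (m0+1) x * cp (x + (2*((m0+1:ℕ):ℂ)+1)*η) := by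
      rw [show x + (2*((m0+1:ℕ):ℂ)-1)*η = x + (2*(m0:ℂ)+1)*η by push_cast; ring,
        show x + (2*((m0+1:ℕ):ℂ)+1)*η = x + (2*(m0:ℂ)+1+2)*η by push_cast; ring]
      field_simp at h3
      rw [show x + η * (2 * (m0:ℂ) + 1 + 2) = x + (2*(m0:ℂ)+1+2)*η by ring,
        show x + η * (2 * (m0:ℂ) + 1) = x + (2*(m0:ℂ)+1)*η by ring,
        show x + η * (2 * (ℓ:ℂ) + 1) = x + (2*(ℓ:ℂ)+1)*η by ring] at h3
      have hsc : (cm x * a m0 (x+η) + cp x * a (m0+1) (x-η)) * a ℓ (x+η)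
          = (a m0 x * cm (x + (2*(m0:ℂ)+1)*η)
             + a (m0+1) x * cp (x + (2*(m0:ℂ)+1+2)*η)) * a ℓ (x+η) := by
        linear_combination h3 + a m0 (x+η) * el
      exact mul_right_cancel₀ hal hsc
    simp only [if_pos (by omega : 1 ≤ m0+1), if_pos hmle, Nat.add_sub_cancel]
    exact hgoal
  · -- m = ℓ+1
    have hmeq : m = ℓ+1 := by omega
    subst hmeq
    have h1 : ¬ (ℓ + 1 ≤ ℓ) := by omega
    simp only [if_neg h1, if_pos (by omega : 1 ≤ ℓ+1), Nat.add_sub_cancel, add_zero]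
    rw [show x + (2*((ℓ+1:ℕ):ℂ)-1)*η = x + (2*(ℓ:ℂ)+1)*η by push_cast; ring]
    exact (key x).1

lemma EidP_zero (hη : η = 0) : EidP ℓ η cm cp a := by
  intro m hm x
  subst hη
  norm_num
  split_ifs <;> ring

lemma E_to_scalar (hE : EidP ℓ η cm cp a) (f : ℂ → ℂ) (x : ℂ) :
    cm x * (∑ k ∈ Finset.range (ℓ + 1), a k (x + η) * f (x + η + (2*(k : ℂ) + 1)*η))
      + cp x * (∑ k ∈ Finset.range (ℓ + 1), a k (x - η) * f (x - η + (2*(k : ℂ) + 1)*η))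
    = ∑ k ∈ Finset.range (ℓ + 1), a k x *
        (cm (x + (2*(k : ℂ) + 1)*η) * f (x + (2*(k : ℂ) + 1)*η + η)
          + cp (x + (2*(k : ℂ) + 1)*η) * f (x + (2*(k : ℂ) + 1)*η - η)) := by
  have p1 : ∑ m ∈ range (ℓ+2), (if 1 ≤ m then cm x * a (m-1) (x+η) else 0) * f (x + 2*(m:ℂ)*η)
      = cm x * (∑ k ∈ range (ℓ+1), a k (x + η) * f (x + η + (2*(k : ℂ) + 1)*η)) := by
    rw [Finset.sum_range_succ']
    have t1 : ∀ k, (if 1 ≤ k+1 then cm x * a (k+1-1) (x+η) else 0) * f (x + 2*((k+1:ℕ):ℂ)*η)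
        = cm x * (a k (x+η) * f (x + η + (2*(k:ℂ)+1)*η)) := by
      intro k
      rw [if_pos (by omega), Nat.add_sub_cancel,
        show x + 2*((k+1:ℕ):ℂ)*η = x + η + (2*(k:ℂ)+1)*η by push_cast; ring]
      ring
    rw [Finset.sum_congr rfl (fun k _ => t1 k)]
    norm_num [Finset.mul_sum]
  have p2 : ∑ m ∈ range (ℓ+2), (if m ≤ ℓ then cp x * a m (x-η) else 0) * f (x + 2*(m:ℂ)*η)
      = cp x * (∑ k ∈ range (ℓ+1), a k (x - η) * f (x - η + (2*(k : ℂ) + 1)*η)) := by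
    rw [Finset.sum_range_succ]
    rw [if_neg (by omega : ¬ (ℓ+1 ≤ ℓ)), zero_mul, add_zero, Finset.mul_sum]
    refine Finset.sum_congr rfl fun k hk => ?_
    simp only [Finset.mem_range] at hk
    rw [if_pos (by omega : k ≤ ℓ),
      show x + 2*((k:ℕ):ℂ)*η = x - η + (2*(k:ℂ)+1)*η by push_cast; ring]
    ring
  have p3 : ∑ m ∈ range (ℓ+2), (if 1 ≤ m then a (m-1) x * cm (x + (2*(m:ℂ)-1)*η) else 0) * f (x + 2*(m:ℂ)*η)
      = ∑ k ∈ range (ℓ+1), a k x * (cm (x + (2*(k : ℂ) + 1)*η) * f (x + (2*(k : ℂ) + 1)*η + η)) := by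
    rw [Finset.sum_range_succ']
    have t1 : ∀ k, (if 1 ≤ k+1 then a (k+1-1) x * cm (x + (2*((k+1:ℕ):ℂ)-1)*η) else 0) * f (x + 2*((k+1:ℕ):ℂ)*η)
        = a k x * (cm (x + (2*(k : ℂ) + 1)*η) * f (x + (2*(k:ℂ)+1)*η + η)) := by
      intro k
      rw [if_pos (by omega), Nat.add_sub_cancel,
        show x + (2*((k+1:ℕ):ℂ)-1)*η = x + (2*(k:ℂ)+1)*η by push_cast; ring,
        show x + 2*((k+1:ℕ):ℂ)*η = x + (2*(k:ℂ)+1)*η + η by push_cast; ring]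
      ring
    rw [Finset.sum_congr rfl (fun k _ => t1 k)]
    norm_num
  have p4 : ∑ m ∈ range (ℓ+2), (if m ≤ ℓ then a m x * cp (x + (2*(m:ℂ)+1)*η) else 0) * f (x + 2*(m:ℂ)*η)
      = ∑ k ∈ range (ℓ+1), a k x * (cp (x + (2*(k : ℂ) + 1)*η) * f (x + (2*(k : ℂ) + 1)*η - η)) := by
    rw [Finset.sum_range_succ]
    rw [if_neg (by omega : ¬ (ℓ+1 ≤ ℓ)), zero_mul, add_zero]
    refine Finset.sum_congr rfl fun k hk => ?_
    simp only [Finset.mem_range] at hk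
    rw [if_pos (by omega : k ≤ ℓ),
      show x + 2*((k:ℕ):ℂ)*η = x + (2*(k:ℂ)+1)*η - η by push_cast; ring]
    ring
  calc cm x * (∑ k ∈ Finset.range (ℓ + 1), a k (x + η) * f (x + η + (2*(k : ℂ) + 1)*η))
      + cp x * (∑ k ∈ Finset.range (ℓ + 1), a k (x - η) * f (x - η + (2*(k : ℂ) + 1)*η))
      = (∑ m ∈ range (ℓ+2), (if 1 ≤ m then cm x * a (m-1) (x+η) else 0) * f (x + 2*(m:ℂ)*η))
        + ∑ m ∈ range (ℓ+2), (if m ≤ ℓ then cp x * a m (x-η) else 0) * f (x + 2*(m:ℂ)*η) := by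
        rw [p1, p2]
    _ = ∑ m ∈ range (ℓ+2),
          ((if 1 ≤ m then cm x * a (m-1) (x+η) else 0)
            + (if m ≤ ℓ then cp x * a m (x-η) else 0)) * f (x + 2*(m:ℂ)*η) := by
        rw [← Finset.sum_add_distrib]
        exact Finset.sum_congr rfl fun m _ => (add_mul _ _ _).symm
    _ = ∑ m ∈ range (ℓ+2),
          ((if 1 ≤ m then a (m-1) x * cm (x + (2*(m:ℂ)-1)*η) else 0)
            + (if m ≤ ℓ then a m x * cp (x + (2*(m:ℂ)+1)*η) else 0)) * f (x + 2*(m:ℂ)*η) := by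
        refine Finset.sum_congr rfl fun m hm => ?_
        simp only [Finset.mem_range] at hm
        rw [hE m (by omega) x]
    _ = (∑ m ∈ range (ℓ+2), (if 1 ≤ m then a (m-1) x * cm (x + (2*(m:ℂ)-1)*η) else 0) * f (x + 2*(m:ℂ)*η))
        + ∑ m ∈ range (ℓ+2), (if m ≤ ℓ then a m x * cp (x + (2*(m:ℂ)+1)*η) else 0) * f (x + 2*(m:ℂ)*η) := by
        rw [← Finset.sum_add_distrib]
        exact Finset.sum_congr rfl fun m _ => add_mul _ _ _
    _ = ∑ k ∈ Finset.range (ℓ + 1), a k x *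
        (cm (x + (2*(k : ℂ) + 1)*η) * f (x + (2*(k : ℂ) + 1)*η + η)
          + cp (x + (2*(k : ℂ) + 1)*η) * f (x + (2*(k : ℂ) + 1)*η - η)) := by
        rw [p3, p4, ← Finset.sum_add_distrib]
        exact Finset.sum_congr rfl fun k _ => by ring

lemma scalar_to_E (hη : η ≠ 0)
    (hs : ∀ f : ℂ → ℂ, ∀ x : ℂ,
      cm x * (∑ k ∈ Finset.range (ℓ + 1), a k (x + η) * f (x + η + (2*(k : ℂ) + 1)*η))
        + cp x * (∑ k ∈ Finset.range (ℓ + 1), a k (x - η) * f (x - η + (2*(k : ℂ) + 1)*η))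
      = ∑ k ∈ Finset.range (ℓ + 1), a k x *
          (cm (x + (2*(k : ℂ) + 1)*η) * f (x + (2*(k : ℂ) + 1)*η + η)
            + cp (x + (2*(k : ℂ) + 1)*η) * f (x + (2*(k : ℂ) + 1)*η - η))) :
    EidP ℓ η cm cp a := by
  intro m hm x
  set f : ℂ → ℂ := fun y => if y = x + 2*(m:ℂ)*η then 1 else 0 with hf
  have key := hs f x
  have hcast : ∀ p q : ℕ, ((p:ℂ) = (q:ℂ)) → p = q := fun p q h => by exact_mod_cast h
  have hf1 : ∀ k : ℕ, f (x + η + (2*(k:ℂ) + 1)*η) = if k + 1 = m then 1 else 0 := by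
    intro k
    by_cases h : k + 1 = m
    · have e : x + η + (2*(k:ℂ)+1)*η = x + 2*(m:ℂ)*η := by
        rw [show (m:ℂ) = ((k:ℂ)+1) by rw [← h]; push_cast; ring]; ring
      simp [hf, e, h]
    · have e : x + η + (2*(k:ℂ)+1)*η ≠ x + 2*(m:ℂ)*η := by
        intro hc
        apply h
        have h2 : ((k:ℂ) + 1 - (m:ℂ)) * (2*η) = 0 := by linear_combination hc
        rcases mul_eq_zero.mp h2 with h3 | h3
        · have h4 : (k:ℂ) + 1 = (m:ℂ) := by linear_combination h3
          exact hcast (k+1) m (by push_cast; exact h4)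
        · have : η = 0 := by
            rcases mul_eq_zero.mp h3 with h5 | h5
            · norm_num at h5
            · exact h5
          exact absurd this hη
      simp [hf, e, h]
  have hf2 : ∀ k : ℕ, f (x - η + (2*(k:ℂ) + 1)*η) = if k = m then 1 else 0 := by
    intro k
    by_cases h : k = m
    · have e : x - η + (2*(k:ℂ)+1)*η = x + 2*(m:ℂ)*η := by rw [← h]; ring
      simp only [hf]
      rw [if_pos e, if_pos h]
    · have e : x - η + (2*(k:ℂ)+1)*η ≠ x + 2*(m:ℂ)*η := by
        intro hc
        apply h
        have h2 : ((k:ℂ) - (m:ℂ)) * (2*η) = 0 := by linear_combination hc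
        rcases mul_eq_zero.mp h2 with h3 | h3
        · have h4 : (k:ℂ) = (m:ℂ) := by linear_combination h3
          exact hcast k m h4
        · have : η = 0 := by
            rcases mul_eq_zero.mp h3 with h5 | h5
            · norm_num at h5
            · exact h5
          exact absurd this hη
      simp [hf, e, h]
  have hg1 : ∀ k : ℕ, f (x + (2*(k:ℂ) + 1)*η + η) = if k + 1 = m then 1 else 0 := by
    intro k
    rw [show x + (2*(k:ℂ)+1)*η + η = x + η + (2*(k:ℂ)+1)*η by ring]
    exact hf1 k
  have hg2 : ∀ k : ℕ, f (x + (2*(k:ℂ) + 1)*η - η) = if k = m then 1 else 0 := by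
    intro k
    rw [show x + (2*(k:ℂ)+1)*η - η = x - η + (2*(k:ℂ)+1)*η by ring]
    exact hf2 k
  have e1 : ∑ k ∈ range (ℓ+1), a k (x+η) * f (x + η + (2*(k:ℂ) + 1)*η)
      = ∑ k ∈ range (ℓ+1), a k (x+η) * (if k + 1 = m then (1:ℂ) else 0) :=
    Finset.sum_congr rfl fun k _ => by rw [hf1 k]
  have e2 : ∑ k ∈ range (ℓ+1), a k (x-η) * f (x - η + (2*(k:ℂ) + 1)*η)
      = ∑ k ∈ range (ℓ+1), a k (x-η) * (if k = m then (1:ℂ) else 0) :=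
    Finset.sum_congr rfl fun k _ => by rw [hf2 k]
  have e3 : ∑ k ∈ range (ℓ+1), a k x *
        (cm (x + (2*(k:ℂ) + 1)*η) * f (x + (2*(k:ℂ) + 1)*η + η)
          + cp (x + (2*(k:ℂ) + 1)*η) * f (x + (2*(k:ℂ) + 1)*η - η))
      = ∑ k ∈ range (ℓ+1), a k x *
        (cm (x + (2*(k:ℂ) + 1)*η) * (if k + 1 = m then (1:ℂ) else 0)
          + cp (x + (2*(k:ℂ) + 1)*η) * (if k = m then 1 else 0)) :=
    Finset.sum_congr rfl fun k _ => by rw [hg1 k, hg2 k]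
  rw [e1, e2, e3] at key
  -- collapse the three sums
  have c1 : ∑ k ∈ range (ℓ+1), a k (x+η) * (if k + 1 = m then (1:ℂ) else 0)
      = if 1 ≤ m then a (m-1) (x+η) else 0 := by
    by_cases h1 : 1 ≤ m
    · rw [if_pos h1, Finset.sum_eq_single (m-1)]
      · rw [if_pos (by omega)]; ring
      · intro k _ hk; rw [if_neg (by omega)]; ring
      · intro h; exact absurd (Finset.mem_range.2 (by omega)) h
    · rw [if_neg h1]
      refine Finset.sum_eq_zero fun k _ => ?_
      rw [if_neg (by omega)]; ring
  have c2 : ∑ k ∈ range (ℓ+1), a k (x-η) * (if k = m then (1:ℂ) else 0)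
      = if m ≤ ℓ then a m (x-η) else 0 := by
    by_cases h1 : m ≤ ℓ
    · rw [if_pos h1, Finset.sum_eq_single m]
      · rw [if_pos rfl]; ring
      · intro k _ hk; rw [if_neg hk]; ring
      · intro h; exact absurd (Finset.mem_range.2 (by omega)) h
    · rw [if_neg h1]
      refine Finset.sum_eq_zero fun k hk => ?_
      simp only [Finset.mem_range] at hk
      rw [if_neg (by omega)]; ring
  have c3 : ∑ k ∈ range (ℓ+1), a k x *
        (cm (x + (2*(k:ℂ) + 1)*η) * (if k + 1 = m then (1:ℂ) else 0)
          + cp (x + (2*(k:ℂ) + 1)*η) * (if k = m then 1 else 0))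
      = (if 1 ≤ m then a (m-1) x * cm (x + (2*(m:ℂ)-1)*η) else 0)
        + (if m ≤ ℓ then a m x * cp (x + (2*(m:ℂ)+1)*η) else 0) := by
    have hsplit : ∀ k : ℕ, a k x *
        (cm (x + (2*(k:ℂ) + 1)*η) * (if k + 1 = m then (1:ℂ) else 0)
          + cp (x + (2*(k:ℂ) + 1)*η) * (if k = m then 1 else 0))
        = a k x * cm (x + (2*(k:ℂ) + 1)*η) * (if k + 1 = m then (1:ℂ) else 0)
          + a k x * cp (x + (2*(k:ℂ) + 1)*η) * (if k = m then 1 else 0) := fun k => by ring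
    rw [Finset.sum_congr rfl (fun k _ => hsplit k), Finset.sum_add_distrib]
    congr 1
    · by_cases h1 : 1 ≤ m
      · rw [if_pos h1, Finset.sum_eq_single (m-1)]
        · rw [if_pos (by omega),
            show x + (2*(((m-1:ℕ)):ℂ)+1)*η = x + (2*(m:ℂ)-1)*η by
              rw [show (((m-1:ℕ)):ℂ) = (m:ℂ)-1 by push_cast [Nat.cast_sub h1]; ring]; ring]
          ring
        · intro k _ hk; rw [if_neg (by omega)]; ring
        · intro h; exact absurd (Finset.mem_range.2 (by omega)) h
      · rw [if_neg h1]
        refine Finset.sum_eq_zero fun k _ => ?_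
        rw [if_neg (by omega)]; ring
    · by_cases h1 : m ≤ ℓ
      · rw [if_pos h1, Finset.sum_eq_single m]
        · rw [if_pos rfl]; ring
        · intro k _ hk; rw [if_neg hk]; ring
        · intro h; exact absurd (Finset.mem_range.2 (by omega)) h
      · rw [if_neg h1]
        refine Finset.sum_eq_zero fun k hk => ?_
        simp only [Finset.mem_range] at hk
        rw [if_neg (by omega)]; ring
  rw [c1, c2, c3] at key
  rw [mul_ite, mul_ite, mul_zero, mul_zero] at key
  exact key

end

/-- Lemma 4.1: commutativity of the scalar difference operators
L and A is equivalent to the matrix Lax equation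
L(x−η,z)·A(x,z) = A(x,z)·L(x,z) for all z ≠ 0 and all x. -/
theorem scalar_commutativity_iff_lax
    (ℓ : ℕ) (η : ℂ) (cm cp : ℂ → ℂ) (a : ℕ → ℂ → ℂ)
    (ha : ∀ x : ℂ, a ℓ x ≠ 0) :
    (∀ f : ℂ → ℂ, ∀ x : ℂ,
        cm x * (∑ k ∈ Finset.range (ℓ + 1), a k (x + η) * f (x + η + (2*(k : ℂ) + 1)*η))
          + cp x * (∑ k ∈ Finset.range (ℓ + 1), a k (x - η) * f (x - η + (2*(k : ℂ) + 1)*η))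
        = ∑ k ∈ Finset.range (ℓ + 1), a k x *
            (cm (x + (2*(k : ℂ) + 1)*η) * f (x + (2*(k : ℂ) + 1)*η + η)
              + cp (x + (2*(k : ℂ) + 1)*η) * f (x + (2*(k : ℂ) + 1)*η - η)))
    ↔ (∀ z : ℂ, z ≠ 0 → ∀ x : ℂ,
        LmatGen ℓ η cm cp a (x - η) z * AmatGen ℓ a x z
          = AmatGen ℓ a x z * LmatGen ℓ η cm cp a x z) := by
  constructor
  · intro hs z hz x
    have hE : EidP ℓ η cm cp a := by
      by_cases hη : η = 0
      · exact EidP_zero ℓ η cm cp a hη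
      · exact scalar_to_E ℓ η cm cp a hη hs
    exact (lax_iff ℓ η cm cp a x z hz ha).mpr
      (fun j hj => E_to_row ℓ η cm cp a x z hE hz ha j hj)
  · intro hm f x
    have hE : EidP ℓ η cm cp a :=
      row_to_E ℓ η cm cp a ha
        (fun z hz x j hj => (lax_iff ℓ η cm cp a x z hz ha).mp (hm z hz x) j hj)
    exact E_to_scalar ℓ η cm cp a hE f x
end
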